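/- arXiv:1208.5978 — 3 statements merged into one kernel-verified Lean document; each statement's English description precedes it below -/
import Mathlib

section
/- For all k ≥ 3 and all 2 ≤ ℓ ≤ k−1, the property Dev(ℓ) does not imply Dev(ℓ+1): there exists a hypergraph sequence of k-uniform hypergraphs satisfying Dev(ℓ) but failing Dev(ℓ+1). -/
open Filter Finset Asymptotics

/-- A hypergraph sequence: for each `n`, the edge set of a hypergraph
on the vertex set `Fin n`. -/
abbrev HSeq : Type := (n : ℕ) → Finset (Finset (Fin n))

/-- The sequence is `k`-uniform: every edge has exactly `k` vertices. -/
def UniformSeq (k : ℕ) (H : HSeq) : Prop :=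
  ∀ n : ℕ, ∀ e ∈ H n, e.card = k

/-- A proper partition of `k`: an (ordered list representing an unordered) collection of
at least two positive integers summing to `k`. -/
def ProperPartition (k : ℕ) (π : List ℕ) : Prop :=
  2 ≤ π.length ∧ (∀ m ∈ π, 0 < m) ∧ π.sum = k

/-- `π'` is a refinement of `π`: there is a surjection `φ` from the parts of `π'`
to the parts of `π` so that each part of `π` is the sum of its `φ`-preimages. -/
def IsRefinement (π' π : List ℕ) : Prop :=
  ∃ φ : Fin π'.length → Fin π.length, Function.Surjective φ ∧
    ∀ i : Fin π.length, π.get i = ∑ j ∈ Finset.univ.filter (fun j => φ j = i), π'.get j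

/-- `e(S_1, …, S_t)`: the number of tuples `(s_1, …, s_t) ∈ S_1 × ⋯ × S_t` whose
union is an edge of `H`. -/
def eCount {n : ℕ} (H : Finset (Finset (Fin n))) {t : ℕ}
    (S : Fin t → Finset (Finset (Fin n))) : ℕ :=
  ((Fintype.piFinset S).filter (fun s => Finset.univ.biUnion s ∈ H)).card

/-- The property `Expand_p(π)` of a hypergraph sequence. -/
def Expand (k : ℕ) (p : ℝ) (π : List ℕ) (H : HSeq) : Prop :=
  ∃ f : ℕ → ℝ, f =o[atTop] (fun n => (n : ℝ) ^ k) ∧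
    ∀ n : ℕ, ∀ S : Fin π.length → Finset (Finset (Fin n)),
      (∀ i : Fin π.length, ∀ s ∈ S i, s.card = π.get i) →
      |(eCount (H n) S : ℝ) - p * ∏ i : Fin π.length, ((S i).card : ℝ)| ≤ f n

/-- The property `PartiteExpand_p(π)`: the `Expand` estimate is only required when the
vertex sets `V(S_i)` are pairwise disjoint. -/
def PartiteExpand (k : ℕ) (p : ℝ) (π : List ℕ) (H : HSeq) : Prop :=
  ∃ f : ℕ → ℝ, f =o[atTop] (fun n => (n : ℝ) ^ k) ∧
    ∀ n : ℕ, ∀ S : Fin π.length → Finset (Finset (Fin n)),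
      (∀ i : Fin π.length, ∀ s ∈ S i, s.card = π.get i) →
      (∀ i j : Fin π.length, i ≠ j →
        Disjoint ((S i).biUnion id) ((S j).biUnion id)) →
      |(eCount (H n) S : ℝ) - p * ∏ i : Fin π.length, ((S i).card : ℝ)| ≤ f n

/-- `K_k(G)`: the `k`-element vertex subsets all of whose `ℓ`-element subsets are
edges of the `ℓ`-uniform hypergraph `G`. -/
def cliqueSet (k ℓ : ℕ) {n : ℕ} (G : Finset (Finset (Fin n))) : Finset (Finset (Fin n)) :=
  (Finset.powersetCard k (Finset.univ : Finset (Fin n))).filter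
    (fun T => ∀ S ∈ Finset.powersetCard ℓ T, S ∈ G)

/-- The property `CD_p(ℓ)` of a hypergraph sequence. -/
def CD (k : ℕ) (p : ℝ) (ℓ : ℕ) (H : HSeq) : Prop :=
  ∃ f : ℕ → ℝ, f =o[atTop] (fun n => (n : ℝ) ^ k) ∧
    ∀ n : ℕ, ∀ G : Finset (Finset (Fin n)), (∀ e ∈ G, e.card = ℓ) →
      |(((cliqueSet k ℓ G) ∩ H n).card : ℝ) - p * ((cliqueSet k ℓ G).card : ℝ)| ≤ f n

/-- The property `CD_p(ℓ,s)` of a hypergraph sequence: `G` ranges over `ℓ`-uniform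
hypergraphs whose vertex set `W` is a subset of `Fin n`, and one counts `k`-sets
inducing at least `s` edges of `G`. -/
def CDs (k : ℕ) (p : ℝ) (ℓ s : ℕ) (H : HSeq) : Prop :=
  ∃ f : ℕ → ℝ, f =o[atTop] (fun n => (n : ℝ) ^ k) ∧
    ∀ n : ℕ, ∀ W : Finset (Fin n), ∀ G : Finset (Finset (Fin n)),
      (∀ e ∈ G, e.card = ℓ ∧ e ⊆ W) →
      |(((H n).filter (fun T => s ≤ (G.filter (fun e => e ⊆ T)).card)).card : ℝ) -
        p * (((Finset.powersetCard k W).filter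
          (fun T => s ≤ (G.filter (fun e => e ⊆ T)).card)).card : ℝ)| ≤ f n

/-- The `k`-tuple `(x_1, …, x_{k-ℓ}, y_{1,ε_1}, …, y_{ℓ,ε_ℓ})`. -/
def octTuple {n : ℕ} (k ℓ : ℕ) (x : Fin (k - ℓ) → Fin n) (y : Fin ℓ × Fin 2 → Fin n)
    (ε : Fin ℓ → Fin 2) (i : Fin k) : Fin n :=
  if h : (i : ℕ) < k - ℓ then x ⟨(i : ℕ), h⟩
  else
    have hi : (i : ℕ) - (k - ℓ) < ℓ := by have := i.isLt; omega
    y (⟨(i : ℕ) - (k - ℓ), hi⟩, ε ⟨(i : ℕ) - (k - ℓ), hi⟩)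

/-- The squashed octahedron `O[x⃗, y⃗]`: the collection of `k`-element sets of the form
`{x_1, …, x_{k-ℓ}, y_{1,i_1}, …, y_{ℓ,i_ℓ}}`. -/
def octSet {n : ℕ} (k ℓ : ℕ) (x : Fin (k - ℓ) → Fin n)
    (y : Fin ℓ × Fin 2 → Fin n) : Finset (Finset (Fin n)) :=
  (Finset.image (fun ε : Fin ℓ → Fin 2 =>
    Finset.image (octTuple k ℓ x y ε) Finset.univ) Finset.univ).filter
    (fun T => T.card = k)

/-- `Σ (−1)^{|O[x⃗,y⃗] ∩ E(H)|}` over all choices of vertices. -/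
noncomputable def devSum (k ℓ : ℕ) {n : ℕ} (H : Finset (Finset (Fin n))) : ℝ :=
  ∑ x : Fin (k - ℓ) → Fin n, ∑ y : Fin ℓ × Fin 2 → Fin n,
    (-1 : ℝ) ^ ((octSet k ℓ x y ∩ H).card)

/-- The property `Dev(ℓ)` of a hypergraph sequence. -/
def Dev (k ℓ : ℕ) (H : HSeq) : Prop :=
  (fun n => devSum k ℓ (H n)) =o[atTop] (fun n => (n : ℝ) ^ (k + ℓ))

open scoped Classical in
/-- `dev_{ℓ,P}(H)`: the deviation sum restricted to octahedra all of whose `k`-tuples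
lie in `P`. -/
noncomputable def devP (k ℓ : ℕ) {n : ℕ} (H : Finset (Finset (Fin n)))
    (P : Set (Fin k → Fin n)) : ℝ :=
  ∑ x : Fin (k - ℓ) → Fin n, ∑ y : Fin ℓ × Fin 2 → Fin n,
    if ∀ ε : Fin ℓ → Fin 2, octTuple k ℓ x y ε ∈ P then
      (-1 : ℝ) ^ ((octSet k ℓ x y ∩ H).card)
    else 0

/-- `Q ⊆ V(H)^k` is complete in coordinate `i`: membership in `Q` only depends on the
coordinates other than `i`. -/
def CompleteInCoord {n k : ℕ} (Q : Set (Fin k → Fin n)) (i : Fin k) : Prop :=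
  ∃ Q' : Set ({j : Fin k // j ≠ i} → Fin n),
    Q = {z : Fin k → Fin n | (fun j : {j : Fin k // j ≠ i} => z j.1) ∈ Q'}


namespace DevC


def bitn (i v : ℕ) : ℕ := v / 2 ^ i % 2

lemma bitn_le_one (i v : ℕ) : bitn i v ≤ 1 := by
  simp only [bitn]
  omega

lemma bitn_mod_pow {i t : ℕ} (h : i < t) (v : ℕ) : bitn i (v % 2 ^ t) = bitn i v := by
  have h1 : (v % 2 ^ t).testBit i = v.testBit i := by
    rw [Nat.testBit_mod_two_pow]; simp [h]
  have e1 := Nat.testBit_eq_decide_div_mod_eq (i := i) (x := v % 2 ^ t)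
  have e2 := Nat.testBit_eq_decide_div_mod_eq (i := i) (x := v)
  rw [h1, e2] at e1
  have hd := decide_eq_decide.mp e1
  have b1 := bitn_le_one i (v % 2 ^ t)
  have b2 := bitn_le_one i v
  simp only [bitn] at *
  omega

def tf (n : ℕ) : ℕ := Nat.log 2 n / 6

lemma tf_tendsto : Filter.Tendsto tf Filter.atTop Filter.atTop := by
  rw [Filter.tendsto_atTop_atTop]
  intro b
  refine ⟨2 ^ (6 * b), fun n hn => ?_⟩
  have h2 : (1:ℕ) ≤ 2 ^ (6*b) := Nat.one_le_two_pow
  have hn0 : n ≠ 0 := by omega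
  have h1 : 6 * b ≤ Nat.log 2 n := (Nat.le_log_iff_pow_le one_lt_two hn0).mpr hn
  unfold tf
  omega

lemma q_le_self {n : ℕ} (hn : 1 ≤ n) : 2 ^ tf n ≤ n :=
  calc 2 ^ tf n ≤ 2 ^ Nat.log 2 n := Nat.pow_le_pow_right (by norm_num) (Nat.div_le_self _ _)
  _ ≤ n := Nat.pow_log_le_self 2 (by omega)

lemma qcube_sq_le {n : ℕ} (hn : 1 ≤ n) : ((2 ^ tf n) ^ 3) ^ 2 ≤ n := by
  rw [← pow_mul, ← pow_mul]
  refine le_trans (Nat.pow_le_pow_right (by norm_num)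
    (show tf n * (3 * 2) ≤ Nat.log 2 n by unfold tf; omega))
    (Nat.pow_log_le_self 2 (by omega))

def chiF (t ℓ : ℕ) {n : ℕ} (e : Finset (Fin n)) : ℕ :=
  ∑ i ∈ Finset.range t, (∑ v ∈ e, bitn i v.val).choose ℓ

lemma choose_sum_eq {α : Type*} [Fintype α] [DecidableEq α] (m : ℕ) (z : α → ℕ)
    (hz : ∀ r, z r ≤ 1) :
    (∑ r, z r).choose m = ∑ T ∈ powersetCard m (univ : Finset α), ∏ r ∈ T, z r := by
  classical
  set A := univ.filter (fun r => z r = 1) with hA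
  have hsum : ∑ r, z r = A.card := by
    rw [hA, card_filter]
    refine Finset.sum_congr rfl (fun r _ => ?_)
    have := hz r
    by_cases h : z r = 1 <;> simp [h] <;> omega
  have hprod : ∀ T ∈ powersetCard m (univ : Finset α),
      (∏ r ∈ T, z r) = if T ⊆ A then 1 else 0 := by
    intro T _
    by_cases hT : T ⊆ A
    · rw [if_pos hT]
      refine Finset.prod_eq_one (fun r hr => ?_)
      have := hT hr
      rw [hA, mem_filter] at this
      exact this.2
    · rw [if_neg hT]
      obtain ⟨r, hrT, hrA⟩ := not_subset.mp hT
      refine Finset.prod_eq_zero hrT ?_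
      have h1 : z r ≠ 1 := by
        intro h; exact hrA (by rw [hA, mem_filter]; exact ⟨mem_univ _, h⟩)
      have := hz r; omega
  rw [Finset.sum_congr rfl hprod, Finset.sum_ite, Finset.sum_const, Finset.sum_const_zero,
    add_zero, smul_eq_mul, mul_one]
  have hfilt : (powersetCard m (univ : Finset α)).filter (· ⊆ A) = powersetCard m A := by
    ext S
    simp only [mem_filter, mem_powersetCard, subset_univ, true_and, mem_powersetCard_univ]
    tauto
  rw [hfilt, card_powersetCard, hsum]

lemma hypercube_sum (L : ℕ) (J : Finset (Fin L)) (h : Fin L → Fin 2 → ℕ) :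
    ∑ ε : Fin L → Fin 2, ∏ j ∈ J, h j (ε j)
      = 2 ^ (L - J.card) * ∏ j ∈ J, (h j 0 + h j 1) := by
  classical
  have h1 : ∀ ε : Fin L → Fin 2, ∏ j ∈ J, h j (ε j)
      = ∏ j : Fin L, (if j ∈ J then h j (ε j) else 1) := by
    intro ε
    rw [← Finset.prod_filter]
    congr 1
    ext j; simp
  simp_rw [h1]
  have h2 : ∑ ε : Fin L → Fin 2, ∏ j : Fin L, (if j ∈ J then h j (ε j) else 1)
      = ∏ j : Fin L, (∑ b : Fin 2, if j ∈ J then h j b else 1) := by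
    rw [Finset.prod_univ_sum, Fintype.piFinset_univ]
  rw [h2]
  have h3 : ∀ j : Fin L, (∑ b : Fin 2, if j ∈ J then h j b else 1)
      = if j ∈ J then (h j 0 + h j 1) else 2 := by
    intro j
    by_cases hj : j ∈ J <;> simp [hj, Fin.sum_univ_two]
  rw [Finset.prod_congr rfl (fun j _ => h3 j), Finset.prod_ite, Finset.prod_const]
  have e1 : univ.filter (fun j => j ∈ J) = J := by ext j; simp
  have e2 : (univ.filter (fun j => ¬ j ∈ J)).card = L - J.card := by
    have h4 : univ.filter (fun j => ¬ j ∈ J) = univ \ J := by ext j; simp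
    rw [h4, card_sdiff_of_subset (subset_univ _), card_univ, Fintype.card_fin]
  rw [e1, e2, mul_comm]



variable {n k L : ℕ}

def slotf (k L : ℕ) (ε : Fin L → Fin 2) (i : Fin k) : Fin (k - L) ⊕ (Fin L × Fin 2) :=
  if h : (i : ℕ) < k - L then Sum.inl ⟨(i : ℕ), h⟩
  else
    have hi : (i : ℕ) - (k - L) < L := by have := i.isLt; omega
    Sum.inr (⟨(i : ℕ) - (k - L), hi⟩, ε ⟨(i : ℕ) - (k - L), hi⟩)

lemma octTuple_eq_elim (x : Fin (k - L) → Fin n) (y : Fin L × Fin 2 → Fin n)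
    (ε : Fin L → Fin 2) (i : Fin k) :
    octTuple k L x y ε i = Sum.elim x y (slotf k L ε i) := by
  unfold octTuple slotf
  by_cases h : (i : ℕ) < k - L <;> simp [h]

lemma slotf_inj (ε : Fin L → Fin 2) : Function.Injective (slotf k L ε) := by
  intro i i' h
  unfold slotf at h
  by_cases h1 : (i : ℕ) < k - L <;> by_cases h2 : (i' : ℕ) < k - L <;>
    simp only [h1, h2, dif_pos, dif_neg, not_false_iff] at h
  · simp only [Sum.inl.injEq, Fin.mk.injEq] at h; exact Fin.ext h
  · simp at h
  · simp at h
  · simp only [Sum.inr.injEq, Prod.mk.injEq, Fin.mk.injEq] at h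
    have := h.1
    have hi := i.isLt; have hi' := i'.isLt
    exact Fin.ext (by omega)

variable {x : Fin (k - L) → Fin n} {y : Fin L × Fin 2 → Fin n}

lemma oct_inj (hxy : Function.Injective (Sum.elim x y)) (ε : Fin L → Fin 2) :
    Function.Injective (octTuple k L x y ε) := by
  intro i i' h
  rw [octTuple_eq_elim, octTuple_eq_elim] at h
  exact slotf_inj ε (hxy h)

lemma slotf_yslot (hLk : L ≤ k) (ε : Fin L → Fin 2) (j : Fin L) :
    slotf k L ε ⟨k - L + (j : ℕ), by omega⟩ = Sum.inr (j, ε j) := by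
  unfold slotf
  rw [dif_neg (by simp)]
  have hj : ∀ (hh : k - L + (j:ℕ) - (k - L) < L),
      (⟨k - L + (j:ℕ) - (k - L), hh⟩ : Fin L) = j := fun hh => Fin.ext (by simp)
  simp [hj]

lemma octTuple_yslot (hLk : L ≤ k) (x : Fin (k - L) → Fin n) (y : Fin L × Fin 2 → Fin n)
    (ε : Fin L → Fin 2) (j : Fin L) :
    octTuple k L x y ε ⟨k - L + (j : ℕ), by omega⟩ = y (j, ε j) := by
  rw [octTuple_eq_elim, slotf_yslot hLk]
  simp

lemma eF_card (hxy : Function.Injective (Sum.elim x y)) (ε : Fin L → Fin 2) :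
    (Finset.image (octTuple k L x y ε) Finset.univ).card = k := by
  rw [Finset.card_image_of_injective _ (oct_inj hxy ε), card_univ, Fintype.card_fin]

lemma eF_inj (hLk : L ≤ k) (hxy : Function.Injective (Sum.elim x y)) :
    Function.Injective (fun ε : Fin L → Fin 2 =>
      Finset.image (octTuple k L x y ε) Finset.univ) := by
  intro ε ε' h
  have h' : Finset.image (octTuple k L x y ε) Finset.univ
      = Finset.image (octTuple k L x y ε') Finset.univ := h
  funext j
  have hmem : y (j, ε j) ∈ Finset.image (octTuple k L x y ε') Finset.univ := by
    rw [← h']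
    refine Finset.mem_image.mpr ⟨⟨k - L + (j : ℕ), by omega⟩, mem_univ _, ?_⟩
    exact octTuple_yslot hLk x y ε j
  obtain ⟨i, _, hi⟩ := Finset.mem_image.mp hmem
  rw [octTuple_eq_elim] at hi
  rcases hsl : slotf k L ε' i with r | p
  · rw [hsl] at hi
    simp only [Sum.elim_inl] at hi
    have h2 : Sum.elim x y (Sum.inl r) = Sum.elim x y (Sum.inr (j, ε j)) := by
      simpa using hi
    exact absurd (hxy h2) (by simp)
  · rw [hsl] at hi
    simp only [Sum.elim_inr] at hi
    have h2 : Sum.elim x y (Sum.inr p) = Sum.elim x y (Sum.inr (j, ε j)) := by simpa using hi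
    have hp : p = (j, ε j) := by simpa using hxy h2
    unfold slotf at hsl
    by_cases hc : (i : ℕ) < k - L
    · simp [hc] at hsl
    · simp only [hc, dif_neg, not_false_iff] at hsl
      have h3 := Sum.inr.inj hsl
      rw [hp] at h3
      have hj1 := congrArg Prod.fst h3
      have hj2 := congrArg Prod.snd h3
      simp only at hj1 hj2
      rw [hj1] at hj2
      exact hj2.symm

lemma octSet_eq_image (hxy : Function.Injective (Sum.elim x y)) :
    octSet k L x y = Finset.image (fun ε : Fin L → Fin 2 =>
      Finset.image (octTuple k L x y ε) Finset.univ) Finset.univ := by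
  unfold octSet
  apply Finset.filter_true_of_mem
  intro T hT
  obtain ⟨ε, _, rfl⟩ := Finset.mem_image.mp hT
  exact eF_card hxy ε

lemma octSet_inter_card (hLk : L ≤ k) (hxy : Function.Injective (Sum.elim x y))
    (H : Finset (Finset (Fin n))) :
    (octSet k L x y ∩ H).card
      = (Finset.univ.filter (fun ε : Fin L → Fin 2 =>
          Finset.image (octTuple k L x y ε) Finset.univ ∈ H)).card := by
  rw [octSet_eq_image hxy]
  have h1 : Finset.image (fun ε : Fin L → Fin 2 =>
      Finset.image (octTuple k L x y ε) Finset.univ) Finset.univ ∩ H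
      = Finset.image (fun ε : Fin L → Fin 2 =>
          Finset.image (octTuple k L x y ε) Finset.univ)
        (Finset.univ.filter (fun ε => Finset.image (octTuple k L x y ε) Finset.univ ∈ H)) := by
    ext T
    simp only [Finset.mem_inter, Finset.mem_image, Finset.mem_filter, mem_univ, true_and]
    constructor
    · rintro ⟨⟨ε, rfl⟩, hT⟩; exact ⟨ε, hT, rfl⟩
    · rintro ⟨ε, hε, rfl⟩; exact ⟨⟨ε, rfl⟩, hε⟩
  rw [h1, Finset.card_image_of_injective _ (eF_inj hLk hxy)]

-- ===== Chunk D: parity of hypercube sums of chi =====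

def xvb {n k L : ℕ} (i : ℕ) (x : Fin (k - L) → Fin n) (r : Fin k) : ℕ :=
  if h : (r : ℕ) < k - L then bitn i (x ⟨(r : ℕ), h⟩).val else 0

def jm {k L : ℕ} (hL : 1 ≤ L) (r : Fin k) : Fin L :=
  ⟨(r : ℕ) - (k - L), by have := r.isLt; omega⟩

lemma jm_injOn {k L : ℕ} (hL : 1 ≤ L) (T : Finset (Fin k)) :
    Set.InjOn (jm (k := k) hL) ↑(T.filter (fun r : Fin k => ¬ (r : ℕ) < k - L)) := by
  intro r hr r' hr' h
  simp only [coe_filter, Set.mem_setOf_eq, mem_coe, mem_filter] at hr hr'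
  have h1 : (r : ℕ) - (k - L) = (r' : ℕ) - (k - L) := congrArg Fin.val h
  exact Fin.ext (by omega)

lemma sum_prod_T {n k L : ℕ} {x : Fin (k - L) → Fin n} {y : Fin L × Fin 2 → Fin n}
    (hL : 1 ≤ L) (i : ℕ) (T : Finset (Fin k)) :
    ∑ ε : Fin L → Fin 2, ∏ r ∈ T, bitn i (octTuple k L x y ε r).val
    = (∏ r ∈ T.filter (fun r : Fin k => (r : ℕ) < k - L), xvb i x r)
      * (2 ^ (L - ((T.filter (fun r : Fin k => ¬ (r : ℕ) < k - L)).image (jm hL)).card)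
         * ∏ j ∈ (T.filter (fun r : Fin k => ¬ (r : ℕ) < k - L)).image (jm hL),
             (bitn i (y (j, 0)).val + bitn i (y (j, 1)).val)) := by
  classical
  have hsplit : ∀ ε : Fin L → Fin 2, ∏ r ∈ T, bitn i (octTuple k L x y ε r).val
      = (∏ r ∈ T.filter (fun r : Fin k => (r : ℕ) < k - L), xvb i x r)
        * ∏ r ∈ T.filter (fun r : Fin k => ¬ (r : ℕ) < k - L),
            bitn i (y (jm hL r, ε (jm hL r))).val := by
    intro ε
    rw [← Finset.prod_filter_mul_prod_filter_not T (fun r : Fin k => (r : ℕ) < k - L)]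
    congr 1
    · refine Finset.prod_congr rfl (fun r hr => ?_)
      rw [mem_filter] at hr
      unfold octTuple xvb
      rw [dif_pos hr.2, dif_pos hr.2]
    · refine Finset.prod_congr rfl (fun r hr => ?_)
      rw [mem_filter] at hr
      unfold octTuple
      rw [dif_neg hr.2]
      rfl
  simp_rw [hsplit]
  rw [← Finset.mul_sum]
  congr 1
  have himg : ∀ ε : Fin L → Fin 2,
      ∏ j ∈ (T.filter (fun r : Fin k => ¬ (r : ℕ) < k - L)).image (jm (k := k) hL),
        bitn i (y (j, ε j)).val
      = ∏ r ∈ T.filter (fun r : Fin k => ¬ (r : ℕ) < k - L),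
          bitn i (y (jm (k := k) hL r, ε (jm (k := k) hL r))).val := by
    intro ε
    refine Finset.prod_image ?_
    intro r hr r' hr' h
    exact jm_injOn hL T (Finset.mem_coe.mpr hr) (Finset.mem_coe.mpr hr') h
  simp_rw [← himg]
  exact hypercube_sum L _ (fun j b => bitn i (y (j, b)).val)

lemma sum_prod_T_even {n k L : ℕ} {x : Fin (k - L) → Fin n} {y : Fin L × Fin 2 → Fin n}
    (hL : 1 ≤ L) (i : ℕ) (T : Finset (Fin k)) (hT : T.card < L) :
    2 ∣ ∑ ε : Fin L → Fin 2, ∏ r ∈ T, bitn i (octTuple k L x y ε r).val := by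
  rw [sum_prod_T hL i T]
  have h1 : ((T.filter (fun r : Fin k => ¬ (r : ℕ) < k - L)).image (jm hL)).card < L :=
    lt_of_le_of_lt (le_trans (Finset.card_image_le) (Finset.card_filter_le _ _)) hT
  have h2 : 2 ∣ 2 ^ (L - ((T.filter (fun r : Fin k => ¬ (r : ℕ) < k - L)).image (jm hL)).card) :=
    dvd_pow_self 2 (by omega)
  exact Dvd.dvd.mul_left (h2.mul_right _) _

/-- the set of `y`-slots -/
def yslots (k L : ℕ) : Finset (Fin k) := univ.filter (fun r : Fin k => ¬ (r : ℕ) < k - L)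

lemma xslots_card (k L : ℕ) : (univ.filter (fun r : Fin k => (r : ℕ) < k - L)).card = k - L := by
  have h1 : univ.filter (fun r : Fin k => (r : ℕ) < k - L)
      = Finset.attachFin (Finset.range (k - L))
          (fun m hm => lt_of_lt_of_le (Finset.mem_range.mp hm) (Nat.sub_le k L)) := by
    ext r
    simp [Finset.mem_attachFin]
  rw [h1, Finset.card_attachFin, Finset.card_range]

lemma yslots_card (k L : ℕ) (hLk : L ≤ k) : (yslots k L).card = L := by
  have h1 := xslots_card k L
  have h2 : (univ.filter (fun r : Fin k => (r : ℕ) < k - L)).card + (yslots k L).card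
      = Fintype.card (Fin k) := by
    rw [← card_univ]
    exact Finset.card_filter_add_card_filter_not _
  rw [Fintype.card_fin] at h2
  omega

lemma yslots_filter (k L : ℕ) :
    (yslots k L).filter (fun r : Fin k => ¬ (r : ℕ) < k - L) = yslots k L := by
  apply Finset.filter_true_of_mem
  intro r hr
  exact (Finset.mem_filter.mp hr).2

lemma yslots_xfilter (k L : ℕ) :
    (yslots k L).filter (fun r : Fin k => (r : ℕ) < k - L) = ∅ := by
  ext r
  simp only [mem_filter, yslots, mem_univ, true_and, Finset.notMem_empty, iff_false]
  tauto

lemma yslots_image (k L : ℕ) (hL : 1 ≤ L) (hLk : L ≤ k) :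
    (yslots k L).image (jm hL) = univ := by
  apply Finset.eq_univ_of_card
  rw [Finset.card_image_of_injOn (by unfold yslots; exact jm_injOn hL univ),
    yslots_card k L hLk, Fintype.card_fin]

lemma sum_prod_T0 {n k L : ℕ} {x : Fin (k - L) → Fin n} {y : Fin L × Fin 2 → Fin n}
    (hL : 1 ≤ L) (hLk : L ≤ k) (i : ℕ) :
    ∑ ε : Fin L → Fin 2, ∏ r ∈ yslots k L, bitn i (octTuple k L x y ε r).val
    = ∏ j : Fin L, (bitn i (y (j, 0)).val + bitn i (y (j, 1)).val) := by
  rw [sum_prod_T hL i (yslots k L), yslots_xfilter, yslots_filter, yslots_image k L hL hLk]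
  simp

lemma T_eq_yslots {k L : ℕ} (hL : 1 ≤ L) (hLk : L ≤ k) (T : Finset (Fin k))
    (hTc : T.card = L)
    (himg : ((T.filter (fun r : Fin k => ¬ (r : ℕ) < k - L)).image (jm hL)).card = L) :
    T = yslots k L := by
  have h1 : ((T.filter (fun r : Fin k => ¬ (r : ℕ) < k - L)).image (jm hL)).card
      ≤ (T.filter (fun r : Fin k => ¬ (r : ℕ) < k - L)).card := Finset.card_image_le
  have h2 : (T.filter (fun r : Fin k => ¬ (r : ℕ) < k - L)).card ≤ T.card := Finset.card_filter_le _ _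
  have h3 : T.filter (fun r : Fin k => ¬ (r : ℕ) < k - L) = T :=
    Finset.eq_of_subset_of_card_le (Finset.filter_subset _ _) (by omega)
  have h4 : T ⊆ yslots k L := by
    intro r hr
    rw [← h3] at hr
    simp only [mem_filter] at hr
    simp only [yslots, mem_filter, mem_univ, true_and]
    exact hr.2
  exact Finset.eq_of_subset_of_card_le h4 (by rw [yslots_card k L hLk]; omega)
-- ===== Chunk E: chi parity propositions and good-term lemmas =====

lemma chi_expand {n k L : ℕ} {x : Fin (k - L) → Fin n} {y : Fin L × Fin 2 → Fin n}
    (m t : ℕ) (hxy : Function.Injective (Sum.elim x y)) (ε : Fin L → Fin 2) :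
    chiF t m (Finset.image (octTuple k L x y ε) Finset.univ)
    = ∑ i ∈ Finset.range t, ∑ T ∈ powersetCard m (univ : Finset (Fin k)),
        ∏ r ∈ T, bitn i (octTuple k L x y ε r).val := by
  unfold chiF
  refine Finset.sum_congr rfl (fun i _ => ?_)
  rw [Finset.sum_image (fun r _ r' _ h => oct_inj hxy ε h)]
  exact choose_sum_eq m _ (fun r => bitn_le_one i _)

lemma sum_chi_even {n k L m : ℕ} {x : Fin (k - L) → Fin n} {y : Fin L × Fin 2 → Fin n}
    (hm : m < L) (t : ℕ) (hxy : Function.Injective (Sum.elim x y)) :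
    2 ∣ ∑ ε : Fin L → Fin 2, chiF t m (Finset.image (octTuple k L x y ε) Finset.univ) := by
  have hL : 1 ≤ L := by omega
  simp_rw [chi_expand m t hxy]
  rw [Finset.sum_comm]
  refine Finset.dvd_sum (fun i _ => ?_)
  rw [Finset.sum_comm]
  refine Finset.dvd_sum (fun T hT => ?_)
  have hTc := Finset.mem_powersetCard_univ.mp hT
  exact sum_prod_T_even hL i T (by omega)

lemma sum_chi_mod {n k L : ℕ} {x : Fin (k - L) → Fin n} {y : Fin L × Fin 2 → Fin n}
    (hL : 1 ≤ L) (hLk : L ≤ k) (t : ℕ) (hxy : Function.Injective (Sum.elim x y)) :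
    (∑ ε : Fin L → Fin 2, chiF t L (Finset.image (octTuple k L x y ε) Finset.univ)) % 2
    = (∑ i ∈ Finset.range t,
        ∏ j : Fin L, (bitn i (y (j, 0)).val + bitn i (y (j, 1)).val)) % 2 := by
  simp_rw [chi_expand L t hxy]
  rw [Finset.sum_comm]
  have key : ∀ i : ℕ, ∃ c : ℕ,
      (∑ ε : Fin L → Fin 2, ∑ T ∈ powersetCard L (univ : Finset (Fin k)),
        ∏ r ∈ T, bitn i (octTuple k L x y ε r).val)
      = (∏ j : Fin L, (bitn i (y (j, 0)).val + bitn i (y (j, 1)).val)) + 2 * c := by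
    intro i
    rw [Finset.sum_comm]
    have hT0mem : yslots k L ∈ powersetCard L (univ : Finset (Fin k)) :=
      Finset.mem_powersetCard_univ.mpr (yslots_card k L hLk)
    rw [← Finset.add_sum_erase _ _ hT0mem]
    have heven : 2 ∣ ∑ T ∈ (powersetCard L (univ : Finset (Fin k))).erase (yslots k L),
        ∑ ε : Fin L → Fin 2, ∏ r ∈ T, bitn i (octTuple k L x y ε r).val := by
      refine Finset.dvd_sum (fun T hT => ?_)
      have h1 : T.card = L := Finset.mem_powersetCard_univ.mp (Finset.mem_of_mem_erase hT)
      have h2 : T ≠ yslots k L := Finset.ne_of_mem_erase hT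
      have h3 : ((T.filter (fun r : Fin k => ¬ (r : ℕ) < k - L)).image (jm hL)).card ≠ L :=
        fun hc => h2 (T_eq_yslots hL hLk T h1 hc)
      have h4 : ((T.filter (fun r : Fin k => ¬ (r : ℕ) < k - L)).image (jm hL)).card ≤ L := by
        refine le_trans Finset.card_image_le (le_trans (Finset.card_filter_le _ _) h1.le)
      rw [sum_prod_T hL i T]
      exact Dvd.dvd.mul_left (Dvd.dvd.mul_right (dvd_pow_self 2 (by omega)) _) _
    obtain ⟨c, hc⟩ := heven
    exact ⟨c, by rw [sum_prod_T0 hL hLk i, hc]⟩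
  choose c hc using key
  rw [Finset.sum_congr rfl (fun i _ => hc i), Finset.sum_add_distrib, ← Finset.mul_sum]
  exact Nat.add_mul_mod_self_left _ 2 _

/-- the counterexample hypergraph sequence -/
def Hc (k m : ℕ) : HSeq := fun n =>
  (Finset.powersetCard k Finset.univ).filter (fun e => chiF (tf n) m e % 2 = 1)

lemma Hc_uniform (k m : ℕ) : UniformSeq k (Hc k m) := by
  intro n e he
  exact Finset.mem_powersetCard_univ.mp (Finset.mem_filter.mp he).1

lemma mem_Hc {n k m : ℕ} {e : Finset (Fin n)} (he : e.card = k) :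
    e ∈ Hc k m n ↔ chiF (tf n) m e % 2 = 1 := by
  simp [Hc, Finset.mem_powersetCard_univ, he]

lemma octSet_card_parity {n k L m : ℕ} {x : Fin (k - L) → Fin n} {y : Fin L × Fin 2 → Fin n}
    (hLk : L ≤ k) (hxy : Function.Injective (Sum.elim x y)) :
    (octSet k L x y ∩ Hc k m n).card % 2
    = (∑ ε : Fin L → Fin 2,
        chiF (tf n) m (Finset.image (octTuple k L x y ε) Finset.univ)) % 2 := by
  rw [octSet_inter_card hLk hxy]
  have h1 : (Finset.univ.filter (fun ε : Fin L → Fin 2 =>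
      Finset.image (octTuple k L x y ε) Finset.univ ∈ Hc k m n)).card
      = ∑ ε : Fin L → Fin 2,
          (chiF (tf n) m (Finset.image (octTuple k L x y ε) Finset.univ) % 2) := by
    rw [Finset.card_filter]
    refine Finset.sum_congr rfl (fun ε _ => ?_)
    simp only [mem_Hc (eF_card hxy ε)]
    have h2 : chiF (tf n) m (Finset.image (octTuple k L x y ε) Finset.univ) % 2 < 2 :=
      Nat.mod_lt _ (by norm_num)
    by_cases h : chiF (tf n) m (Finset.image (octTuple k L x y ε) Finset.univ) % 2 = 1
    · simp [h]
    · simp only [h, if_false]; omega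
  rw [h1]
  exact (Finset.sum_nat_mod _ 2 _).symm

lemma term_ge_neg_one (c : ℕ) : (-1 : ℝ) ≤ (-1 : ℝ) ^ c := by
  rcases Nat.even_or_odd c with h | h
  · rw [h.neg_one_pow]; norm_num
  · rw [h.neg_one_pow]

lemma good_term_B {n k L m : ℕ} {x : Fin (k - L) → Fin n} {y : Fin L × Fin 2 → Fin n}
    (hLk : L ≤ k) (hm : m < L) (hxy : Function.Injective (Sum.elim x y)) :
    (-1 : ℝ) ^ ((octSet k L x y ∩ Hc k m n).card) = 1 := by
  apply Even.neg_one_pow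
  have h1 := octSet_card_parity (m := m) hLk hxy
  obtain ⟨c, hc⟩ := sum_chi_even hm (tf n) hxy
  rw [hc] at h1
  rw [Nat.even_iff, h1, Nat.mul_mod_right]

def EY (t : ℕ) {n L : ℕ} (y : Fin L × Fin 2 → Fin n) : ℕ :=
  ∑ i ∈ Finset.range t, ∏ j : Fin L, (bitn i (y (j, 0)).val + bitn i (y (j, 1)).val)

noncomputable def GF (t : ℕ) {n L : ℕ} (y : Fin L × Fin 2 → Fin n) : ℝ :=
  ∏ i ∈ Finset.range t,
    (1 - 2 * ∏ j : Fin L, (((bitn i (y (j, 0)).val + bitn i (y (j, 1)).val) % 2 : ℕ) : ℝ))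

lemma neg_one_pow_eq_of_mod (a b : ℕ) (h : a % 2 = b % 2) : ((-1 : ℝ)) ^ a = (-1) ^ b := by
  rcases Nat.even_or_odd a with ha | ha
  · have hb : Even b := by rw [Nat.even_iff] at *; omega
    rw [ha.neg_one_pow, hb.neg_one_pow]
  · have hb : Odd b := by
      rw [Nat.odd_iff] at *; omega
    rw [ha.neg_one_pow, hb.neg_one_pow]

lemma neg_one_pow_EY (t : ℕ) {n L : ℕ} (y : Fin L × Fin 2 → Fin n) :
    ((-1 : ℝ)) ^ EY t y = GF t y := by
  unfold EY GF
  rw [← Finset.prod_pow_eq_pow_sum]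
  refine Finset.prod_congr rfl (fun i _ => ?_)
  set g : Fin L → ℕ := fun j => bitn i (y (j, 0)).val + bitn i (y (j, 1)).val with hg
  by_cases hall : ∀ j, g j % 2 = 1
  · have hodd : (∏ j, g j) % 2 = 1 := by
      rw [Finset.prod_nat_mod]
      simp [hall]
    rw [(Nat.odd_iff.mpr hodd).neg_one_pow]
    have hone : ∀ j : Fin L, ((g j % 2 : ℕ) : ℝ) = 1 := fun j => by rw [hall j]; norm_num
    rw [Finset.prod_congr rfl (fun j _ => hone j), Finset.prod_const_one]
    norm_num
  · push_neg at hall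
    obtain ⟨j0, hj0⟩ := hall
    have h0 : g j0 % 2 = 0 := by
      have := Nat.mod_lt (g j0) (show 0 < 2 by norm_num); omega
    have heven : Even (∏ j, g j) := by
      rw [Nat.even_iff, Finset.prod_nat_mod, Finset.prod_eq_zero (Finset.mem_univ j0) h0]
      rfl
    rw [heven.neg_one_pow]
    have hzero : ((g j0 % 2 : ℕ) : ℝ) = 0 := by rw [h0]; norm_num
    rw [Finset.prod_eq_zero (Finset.mem_univ j0) hzero]
    norm_num

lemma good_term_C {n k L : ℕ} {x : Fin (k - L) → Fin n} {y : Fin L × Fin 2 → Fin n}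
    (hL : 1 ≤ L) (hLk : L ≤ k) (hxy : Function.Injective (Sum.elim x y)) :
    ((-1 : ℝ)) ^ ((octSet k L x y ∩ Hc k L n).card) = GF (tf n) y := by
  rw [← neg_one_pow_EY]
  refine neg_one_pow_eq_of_mod _ _ ?_
  rw [octSet_card_parity hLk hxy, sum_chi_mod hL hLk (tf n) hxy]
  rfl

-- ===== Chunk F: counting non-injective functions =====

lemma card_noninj (α β : Type*) [Fintype α] [DecidableEq α] [Fintype β] [DecidableEq β] :
    ((univ : Finset (α → β)).filter (fun f => ¬ Function.Injective f)).card
      ≤ (Fintype.card α) ^ 2 * (Fintype.card β) ^ (Fintype.card α - 1) := by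
  classical
  have hsub : (univ : Finset (α → β)).filter (fun f => ¬ Function.Injective f)
      ⊆ (univ : Finset α).offDiag.biUnion
          (fun p => univ.filter (fun f : α → β => f p.1 = f p.2)) := by
    intro f hf
    rw [Finset.mem_filter] at hf
    have h2 := hf.2
    simp only [Function.Injective, not_forall] at h2
    obtain ⟨a, b, hab, hne⟩ := h2
    refine Finset.mem_biUnion.mpr ⟨(a, b), ?_, ?_⟩
    · exact Finset.mem_offDiag.mpr ⟨Finset.mem_univ _, Finset.mem_univ _, hne⟩
    · exact Finset.mem_filter.mpr ⟨Finset.mem_univ _, hab⟩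
  refine le_trans (Finset.card_le_card hsub) (le_trans Finset.card_biUnion_le ?_)
  have hper : ∀ p ∈ (univ : Finset α).offDiag,
      (univ.filter (fun f : α → β => f p.1 = f p.2)).card
        ≤ (Fintype.card β) ^ (Fintype.card α - 1) := by
    rintro ⟨a, b⟩ hp
    have hab : a ≠ b := (Finset.mem_offDiag.mp hp).2.2
    have hinj : Set.InjOn (fun (f : α → β) => (fun c : {c : α // c ≠ a} => f c.1))
        ↑(univ.filter (fun f : α → β => f a = f b)) := by
      intro f hf g hg hfg
      rw [Finset.mem_coe, Finset.mem_filter] at hf hg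
      funext c
      by_cases hc : c = a
      · subst hc
        have hb : f b = g b := congrFun hfg ⟨b, Ne.symm hab⟩
        rw [hf.2, hg.2, hb]
      · exact congrFun hfg ⟨c, hc⟩
    have hcard := Finset.card_le_card_of_injOn _ (fun f _ => Finset.mem_univ
      ((fun c : {c : α // c ≠ a} => f c.1))) hinj
    refine le_trans hcard ?_
    rw [Finset.card_univ, Fintype.card_fun]
    have hst : Fintype.card {c : α // c ≠ a} = Fintype.card α - 1 := by
      simpa using Fintype.card_subtype_compl (fun c : α => c = a)
    rw [hst]
  refine le_trans (Finset.sum_le_sum hper) ?_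
  rw [Finset.sum_const, smul_eq_mul]
  refine Nat.mul_le_mul_right _ ?_
  rw [Finset.offDiag_card, Finset.card_univ, pow_two]
  exact Nat.sub_le _ _

lemma devSum_eq_sum_fun (k L : ℕ) {n : ℕ} (H : Finset (Finset (Fin n))) :
    devSum k L H = ∑ f : (Fin (k - L) ⊕ Fin L × Fin 2) → Fin n,
      (-1 : ℝ) ^ ((octSet k L (f ∘ Sum.inl) (f ∘ Sum.inr) ∩ H).card) := by
  unfold devSum
  rw [← Fintype.sum_prod_type']
  exact (Fintype.sum_equiv (Equiv.sumArrowEquivProdArrow _ _ (Fin n))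
    (fun f => (-1 : ℝ) ^ ((octSet k L (f ∘ Sum.inl) (f ∘ Sum.inr) ∩ H).card))
    (fun p => (-1 : ℝ) ^ ((octSet k L p.1 p.2 ∩ H).card))
    (fun f => rfl)).symm

lemma sum_fun_eq_sum_pair (k L : ℕ) {n : ℕ} (Φ : (Fin L × Fin 2 → Fin n) → ℝ) :
    ∑ f : (Fin (k - L) ⊕ Fin L × Fin 2) → Fin n, Φ (f ∘ Sum.inr)
      = (n : ℝ) ^ (k - L) * ∑ y : Fin L × Fin 2 → Fin n, Φ y := by
  have h1 : ∑ f : (Fin (k - L) ⊕ Fin L × Fin 2) → Fin n, Φ (f ∘ Sum.inr)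
      = ∑ p : (Fin (k - L) → Fin n) × (Fin L × Fin 2 → Fin n), Φ p.2 :=
    Fintype.sum_equiv (Equiv.sumArrowEquivProdArrow _ _ (Fin n)) _ _ (fun f => rfl)
  rw [h1, Fintype.sum_prod_type]
  have h2 : ∀ x : Fin (k - L) → Fin n,
      ∑ y : Fin L × Fin 2 → Fin n, Φ ((x, y).2) = ∑ y : Fin L × Fin 2 → Fin n, Φ y :=
    fun x => rfl
  rw [Finset.sum_congr rfl (fun x _ => h2 x), Finset.sum_const, nsmul_eq_mul,
    Finset.card_univ, Fintype.card_fun, Fintype.card_fin, Fintype.card_fin, Nat.cast_pow]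

lemma card_sum_idx (k L : ℕ) (hLk : L ≤ k) :
    Fintype.card (Fin (k - L) ⊕ Fin L × Fin 2) = k + L := by
  rw [Fintype.card_sum, Fintype.card_prod]
  simp only [Fintype.card_fin]
  omega

lemma card_fun_sum (k L n : ℕ) (hLk : L ≤ k) :
    Fintype.card ((Fin (k - L) ⊕ Fin L × Fin 2) → Fin n) = n ^ (k + L) := by
  rw [Fintype.card_fun, card_sum_idx k L hLk, Fintype.card_fin]

-- ===== Chunk G: Part B : devSum lower bound and failure of Dev(m+1) =====

lemma devSum_lower (k m n : ℕ) (hmk : m + 1 ≤ k) :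
    (n : ℝ) ^ (k + m + 1) - 2 * (((k + m + 1 : ℕ) : ℝ) ^ 2 * (n : ℝ) ^ (k + m))
      ≤ devSum k (m + 1) (Hc k m n) := by
  classical
  set L := m + 1 with hLdef
  have hLk : L ≤ k := hmk
  have hkL1 : k + L = k + m + 1 := by omega
  have hkL2 : k + L - 1 = k + m := by omega
  rw [devSum_eq_sum_fun]
  set σ := (Fin (k - L) ⊕ Fin L × Fin 2) with hσ
  set B : Finset (σ → Fin n) := univ.filter (fun f => ¬ Function.Injective f) with hB
  set G : Finset (σ → Fin n) := univ.filter (fun f => Function.Injective f) with hG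
  have hterm1 : ∀ f : σ → Fin n, Function.Injective f →
      (-1 : ℝ) ^ ((octSet k L (f ∘ Sum.inl) (f ∘ Sum.inr) ∩ Hc k m n).card) = 1 := by
    intro f hf
    refine good_term_B hLk (by omega) ?_
    rw [Sum.elim_comp_inl_inr f]
    exact hf
  have hsplit : ∑ f : σ → Fin n,
      (-1 : ℝ) ^ ((octSet k L (f ∘ Sum.inl) (f ∘ Sum.inr) ∩ Hc k m n).card)
      = (∑ f ∈ G, (-1 : ℝ) ^ ((octSet k L (f ∘ Sum.inl) (f ∘ Sum.inr) ∩ Hc k m n).card))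
        + ∑ f ∈ B, (-1 : ℝ) ^ ((octSet k L (f ∘ Sum.inl) (f ∘ Sum.inr) ∩ Hc k m n).card) := by
    rw [hG, hB]
    exact (Finset.sum_filter_add_sum_filter_not _ _ _).symm
  rw [hsplit]
  have hGsum : (∑ f ∈ G,
      (-1 : ℝ) ^ ((octSet k L (f ∘ Sum.inl) (f ∘ Sum.inr) ∩ Hc k m n).card)) = G.card := by
    rw [Finset.sum_congr rfl (fun f hf => hterm1 f (Finset.mem_filter.mp hf).2),
      Finset.sum_const, nsmul_eq_mul, mul_one]
  rw [hGsum]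
  have hBsum : (-1 : ℝ) * B.card ≤
      ∑ f ∈ B, (-1 : ℝ) ^ ((octSet k L (f ∘ Sum.inl) (f ∘ Sum.inr) ∩ Hc k m n).card) := by
    calc (-1 : ℝ) * B.card = ∑ _f ∈ B, (-1 : ℝ) := by
          rw [Finset.sum_const, nsmul_eq_mul, mul_comm, mul_neg, mul_one]
    _ ≤ _ := Finset.sum_le_sum (fun f _ => term_ge_neg_one _)
  have hcards : (G.card : ℝ) = (n : ℝ) ^ (k + m + 1) - B.card := by
    have h1 : G.card + B.card = n ^ (k + L) := by
      rw [hG, hB, Finset.card_filter_add_card_filter_not, Finset.card_univ]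
      exact card_fun_sum k L n hLk
    rw [hkL1] at h1
    have h2 : (G.card : ℝ) + B.card = ((n ^ (k + m + 1) : ℕ) : ℝ) := by exact_mod_cast h1
    push_cast at h2
    linarith
  have hBbound : (B.card : ℝ) ≤ ((k + m + 1 : ℕ) : ℝ) ^ 2 * (n : ℝ) ^ (k + m) := by
    have h1 := card_noninj σ (Fin n)
    rw [card_sum_idx k L hLk, Fintype.card_fin, hkL2, hkL1] at h1
    have h2 : (B.card : ℝ) ≤ (((k + m + 1) ^ 2 * n ^ (k + m) : ℕ) : ℝ) := by
      rw [hB]; exact_mod_cast h1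
    push_cast at h2 ⊢
    linarith
  have hB0 : (0 : ℝ) ≤ B.card := Nat.cast_nonneg _
  calc (n : ℝ) ^ (k + m + 1) - 2 * (((k + m + 1 : ℕ) : ℝ) ^ 2 * (n : ℝ) ^ (k + m))
      ≤ ((n : ℝ) ^ (k + m + 1) - B.card) + (-1 : ℝ) * B.card := by linarith
  _ ≤ _ := by rw [← hcards]; linarith

lemma notDevB (k m : ℕ) (hmk : m + 1 ≤ k) :
    ¬ ((fun n => devSum k (m + 1) (Hc k m n)) =o[atTop]
        (fun n => (n : ℝ) ^ (k + (m + 1)))) := by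
  intro h
  rw [isLittleO_iff] at h
  have hb := h (show (0 : ℝ) < 1/2 by norm_num)
  rw [eventually_atTop] at hb
  obtain ⟨N, hN⟩ := hb
  set n := max N (4 * (k + m + 1) ^ 2 + 1) with hn
  have h1 := hN n (le_max_left _ _)
  have hlow := devSum_lower k m n hmk
  rw [Real.norm_eq_abs, Real.norm_eq_abs] at h1
  have hKe : k + (m + 1) = k + m + 1 := by omega
  rw [hKe] at h1
  have hnK : |(n : ℝ) ^ (k + m + 1)| = (n : ℝ) ^ (k + m + 1) := abs_of_nonneg (by positivity)
  rw [hnK] at h1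
  have habs : devSum k (m + 1) (Hc k m n) ≤ |devSum k (m + 1) (Hc k m n)| := le_abs_self _
  have hngeq : (4 * (k + m + 1) ^ 2 + 1 : ℕ) ≤ n := le_max_right _ _
  have hsplit : (n : ℝ) ^ (k + m + 1) = (n : ℝ) * (n : ℝ) ^ (k + m) := by
    rw [← pow_succ']
  have hpow : (0 : ℝ) < (n : ℝ) ^ (k + m) := by
    have hn1 : (1 : ℕ) ≤ n := by omega
    positivity
  have hq : 2 * (((k + m + 1 : ℕ) : ℝ) ^ 2 * (n : ℝ) ^ (k + m)) < 1/2 * (n : ℝ) ^ (k + m + 1) := by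
    rw [hsplit]
    have h4 : (4 : ℝ) * ((k + m + 1 : ℕ) : ℝ) ^ 2 < (n : ℝ) := by
      have h5 : ((4 * (k + m + 1) ^ 2 + 1 : ℕ) : ℝ) ≤ (n : ℝ) := by exact_mod_cast hngeq
      push_cast at h5 ⊢
      nlinarith
    nlinarith
  linarith
-- ===== Chunk H1: counting machinery for the Dev(ℓ) estimate =====

noncomputable def dR (i : ℕ) {n : ℕ} (a b : Fin n) : ℝ :=
  (((bitn i a.val + bitn i b.val) % 2 : ℕ) : ℝ)

lemma dR_nonneg (i : ℕ) {n : ℕ} (a b : Fin n) : 0 ≤ dR i a b := Nat.cast_nonneg _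

lemma dR_le_one (i : ℕ) {n : ℕ} (a b : Fin n) : dR i a b ≤ 1 := by
  unfold dR
  have h : (bitn i a.val + bitn i b.val) % 2 ≤ 1 := by omega
  exact_mod_cast h

lemma GF_eq (t : ℕ) {n L : ℕ} (y : Fin L × Fin 2 → Fin n) :
    GF t y = ∏ i ∈ Finset.range t,
      (1 - 2 * ∏ j : Fin L, dR i (y (j, 0)) (y (j, 1))) := rfl

lemma GF_abs_le_one (t : ℕ) {n L : ℕ} (y : Fin L × Fin 2 → Fin n) : |GF t y| ≤ 1 := by
  rw [GF_eq]
  rw [Finset.abs_prod]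
  refine Finset.prod_le_one (fun i _ => abs_nonneg _) (fun i _ => ?_)
  have h1 : 0 ≤ ∏ j : Fin L, dR i (y (j, 0)) (y (j, 1)) :=
    Finset.prod_nonneg (fun j _ => dR_nonneg _ _ _)
  have h2 : ∏ j : Fin L, dR i (y (j, 0)) (y (j, 1)) ≤ 1 :=
    Finset.prod_le_one (fun j _ => dR_nonneg _ _ _) (fun j _ => dR_le_one _ _ _)
  rw [abs_le]
  constructor <;> nlinarith

noncomputable def MI (n : ℕ) (I : Finset ℕ) : ℝ := ∑ a : Fin n, ∑ b : Fin n, ∏ i ∈ I, dR i a b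

lemma MI_nonneg (n : ℕ) (I : Finset ℕ) : 0 ≤ MI n I :=
  Finset.sum_nonneg fun a _ => Finset.sum_nonneg fun b _ =>
    Finset.prod_nonneg fun i _ => dR_nonneg _ _ _

lemma MI_le_sq (n : ℕ) (I : Finset ℕ) : MI n I ≤ (n : ℝ) ^ 2 := by
  have h : MI n I ≤ ∑ _a : Fin n, ∑ _b : Fin n, (1 : ℝ) := by
    refine Finset.sum_le_sum fun a _ => Finset.sum_le_sum fun b _ => ?_
    exact Finset.prod_le_one (fun i _ => dR_nonneg _ _ _) (fun i _ => dR_le_one _ _ _)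
  simpa [Finset.sum_const, Finset.card_univ, pow_two] using h

lemma sum_GF_expand (t : ℕ) (n L : ℕ) :
    ∑ y : Fin L × Fin 2 → Fin n, GF t y
    = ∑ I ∈ (Finset.range t).powerset, (-2 : ℝ) ^ I.card * (MI n I) ^ L := by
  classical
  have h1 : ∀ y : Fin L × Fin 2 → Fin n, GF t y
      = ∑ I ∈ (Finset.range t).powerset,
          (-2 : ℝ) ^ I.card * ∏ i ∈ I, ∏ j : Fin L, dR i (y (j, 0)) (y (j, 1)) := by
    intro y
    rw [GF_eq]
    calc ∏ i ∈ Finset.range t, (1 - 2 * ∏ j : Fin L, dR i (y (j, 0)) (y (j, 1)))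
        = ∏ i ∈ Finset.range t,
            ((-2 : ℝ) * ∏ j : Fin L, dR i (y (j, 0)) (y (j, 1)) + 1) := by
          refine Finset.prod_congr rfl fun i _ => by ring
      _ = ∑ I ∈ (Finset.range t).powerset,
            (∏ i ∈ I, (-2 : ℝ) * ∏ j : Fin L, dR i (y (j, 0)) (y (j, 1)))
              * ∏ _i ∈ Finset.range t \ I, (1 : ℝ) :=
          Finset.prod_add _ _ _
      _ = _ := by
          refine Finset.sum_congr rfl fun I hI => ?_
          rw [Finset.prod_const_one, mul_one, Finset.prod_mul_distrib, Finset.prod_const]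
  simp_rw [h1]
  rw [Finset.sum_comm]
  refine Finset.sum_congr rfl fun I hI => ?_
  rw [← Finset.mul_sum]
  congr 1
  have h2 : ∀ y : Fin L × Fin 2 → Fin n,
      ∏ i ∈ I, ∏ j : Fin L, dR i (y (j, 0)) (y (j, 1))
      = ∏ j : Fin L, ∏ i ∈ I, dR i (y (j, 0)) (y (j, 1)) := fun y => Finset.prod_comm
  simp_rw [h2]
  have h3 : ∑ y : Fin L × Fin 2 → Fin n, ∏ j : Fin L, ∏ i ∈ I, dR i (y (j, 0)) (y (j, 1))
      = ∑ g : Fin L → (Fin 2 → Fin n), ∏ j : Fin L, ∏ i ∈ I, dR i (g j 0) (g j 1) :=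
    Fintype.sum_equiv (Equiv.curry (Fin L) (Fin 2) (Fin n)) _ _ (fun y => rfl)
  rw [h3]
  have h4 : ∑ g : Fin L → (Fin 2 → Fin n), ∏ j : Fin L, ∏ i ∈ I, dR i (g j 0) (g j 1)
      = ∏ _j : Fin L, ∑ z : Fin 2 → Fin n, ∏ i ∈ I, dR i (z 0) (z 1) := by
    rw [Finset.prod_univ_sum (fun _ => (univ : Finset (Fin 2 → Fin n)))
      (fun _j (z : Fin 2 → Fin n) => ∏ i ∈ I, dR i (z 0) (z 1)), Fintype.piFinset_univ]
  rw [h4, Finset.prod_const, Finset.card_univ, Fintype.card_fin]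
  congr 1
  unfold MI
  rw [← Fintype.sum_prod_type']
  exact Fintype.sum_equiv (finTwoArrowEquiv (Fin n)) _ _ (fun z => rfl)

-- residue counting

def rho {n : ℕ} {q : ℕ} (hq : 0 < q) (a : Fin n) : Fin q := ⟨a.val % q, Nat.mod_lt _ hq⟩

def cntf (n : ℕ) {q : ℕ} (hq : 0 < q) (r : Fin q) : ℕ :=
  ((univ : Finset (Fin n)).filter (fun a => rho hq a = r)).card

lemma cnt_sum (n : ℕ) {q : ℕ} (hq : 0 < q) : ∑ r : Fin q, cntf n hq r = n := by
  have h := Finset.card_eq_sum_card_fiberwise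
    (f := rho (n := n) hq) (s := univ) (t := univ) (fun a _ => mem_univ _)
  rw [card_univ, Fintype.card_fin] at h
  exact h.symm

lemma cnt_lb (n : ℕ) {q : ℕ} (hq : 0 < q) (hqn : q ≤ n) (r : Fin q) :
    n / q ≤ cntf n hq r := by
  have hn : 0 < n := lt_of_lt_of_le hq hqn
  have hnq : 1 ≤ n / q := (Nat.one_le_div_iff hq).mpr hqn
  set f : ℕ → Fin n := fun m => if h : q * m + r.val < n then ⟨q * m + r.val, h⟩ else ⟨0, hn⟩
    with hf
  have hlt : ∀ m ∈ Finset.range (n / q), q * m + r.val < n := by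
    intro m hm
    rw [Finset.mem_range] at hm
    have hr : r.val < q := r.isLt
    calc q * m + r.val < q * m + q := by omega
      _ = q * (m + 1) := by ring
      _ ≤ q * (n / q) := Nat.mul_le_mul_left q (by omega)
      _ ≤ n := by rw [mul_comm]; exact Nat.div_mul_le_self n q
  have hmem : ∀ m ∈ Finset.range (n / q),
      f m ∈ (univ : Finset (Fin n)).filter (fun a => rho hq a = r) := by
    intro m hm
    have h1 := hlt m hm
    rw [Finset.mem_filter]
    refine ⟨mem_univ _, ?_⟩
    rw [hf]
    simp only [dif_pos h1]
    unfold rho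
    refine Fin.ext ?_
    simp only
    rw [Nat.mul_add_mod]
    exact Nat.mod_eq_of_lt r.isLt
  have hinj : Set.InjOn f ↑(Finset.range (n / q)) := by
    intro m hm m' hm' hmm
    rw [Finset.mem_coe] at hm hm'
    have h1 := hlt m hm
    have h2 := hlt m' hm'
    rw [hf] at hmm
    simp only [dif_pos h1, dif_pos h2] at hmm
    have h3 : q * m + r.val = q * m' + r.val := congrArg Fin.val hmm
    have h4 : q * m = q * m' := by omega
    exact Nat.eq_of_mul_eq_mul_left hq h4
  have := Finset.card_le_card_of_injOn f hmem hinj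
  rw [Finset.card_range] at this
  exact this

lemma cnt_ub (n : ℕ) {q : ℕ} (hq : 0 < q) (r : Fin q) : cntf n hq r ≤ n / q + 1 := by
  have hmem : ∀ a ∈ (univ : Finset (Fin n)).filter (fun a => rho hq a = r),
      a.val / q ∈ Finset.range (n / q + 1) := by
    intro a _
    rw [Finset.mem_range]
    have h1 : a.val / q ≤ n / q := Nat.div_le_div_right (le_of_lt a.isLt)
    omega
  have hinj : Set.InjOn (fun a : Fin n => a.val / q)
      ↑((univ : Finset (Fin n)).filter (fun a => rho hq a = r)) := by
    intro a ha a' ha' haa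
    rw [Finset.mem_coe, Finset.mem_filter] at ha ha'
    have h1 : a.val % q = r.val := congrArg Fin.val ha.2
    have h2 : a'.val % q = r.val := congrArg Fin.val ha'.2
    have h3 := Nat.div_add_mod a.val q
    have h4 := Nat.div_add_mod a'.val q
    simp only at haa
    refine Fin.ext ?_
    have h5 : q * (a.val / q) = q * (a'.val / q) := by rw [haa]
    omega
  have := Finset.card_le_card_of_injOn _ hmem hinj
  rw [Finset.card_range] at this
  exact this
-- ===== Chunk H2: MI estimates =====

lemma sum_rho {n q : ℕ} (hq : 0 < q) (g : Fin q → ℝ) :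
    ∑ a : Fin n, g (rho hq a) = ∑ r : Fin q, (cntf n hq r : ℝ) * g r := by
  rw [← Finset.sum_fiberwise (univ : Finset (Fin n)) (rho hq) (fun a => g (rho hq a))]
  refine Finset.sum_congr rfl fun r _ => ?_
  rw [Finset.sum_congr rfl (fun a ha => by rw [(Finset.mem_filter.mp ha).2]),
    Finset.sum_const, nsmul_eq_mul]
  rfl

lemma fe_val {t : ℕ} (β : Fin t → Fin 2) (i : Fin t) :
    bitn i.val ((finFunctionFinEquiv β : Fin (2 ^ t)) : ℕ) = (β i).val := by
  have h := congrFun (finFunctionFinEquiv.symm_apply_apply β) i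
  have h2 : ((finFunctionFinEquiv.symm (finFunctionFinEquiv β)) i).val = (β i).val :=
    congrArg Fin.val h
  rw [← h2]
  rfl

lemma dd2_sum : ∑ p : Fin 2 × Fin 2, (((p.1.val + p.2.val) % 2 : ℕ) : ℝ) = 2 := by
  rw [Fintype.sum_prod_type]
  simp [Fin.sum_univ_two]
  norm_num

lemma P_eq (t : ℕ) (I : Finset ℕ) (hI : I ⊆ Finset.range t) :
    ∑ r : Fin (2 ^ t), ∑ s : Fin (2 ^ t),
        (∏ i ∈ I, (((bitn i r.val + bitn i s.val) % 2 : ℕ) : ℝ))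
      = 2 ^ I.card * 4 ^ (t - I.card) := by
  classical
  set If : Finset (Fin t) := univ.filter (fun i => i.val ∈ I) with hIf
  have himg : If.image Fin.val = I := by
    ext mm
    simp only [hIf, Finset.mem_image, Finset.mem_filter, Finset.mem_univ, true_and]
    constructor
    · rintro ⟨i, hi, rfl⟩; exact hi
    · intro hmm
      have : mm < t := Finset.mem_range.mp (hI hmm)
      exact ⟨⟨mm, this⟩, hmm, rfl⟩
  have hIcard : If.card = I.card := by
    rw [← himg, Finset.card_image_of_injective _ Fin.val_injective]
  have hprodI : ∀ (F : ℕ → ℝ), ∏ i ∈ I, F i = ∏ i ∈ If, F i.val := by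
    intro F
    rw [← himg, Finset.prod_image (fun a _ b _ h => Fin.val_injective h)]
  have hsum1 : ∀ G : Fin (2 ^ t) → ℝ,
      ∑ r : Fin (2 ^ t), G r = ∑ β : Fin t → Fin 2, G (finFunctionFinEquiv β) :=
    fun G => (Equiv.sum_comp finFunctionFinEquiv G).symm
  rw [hsum1]
  have hstep : ∀ β : Fin t → Fin 2,
      ∑ s : Fin (2 ^ t), ∏ i ∈ I,
        (((bitn i ((finFunctionFinEquiv β : Fin (2 ^ t)) : ℕ) + bitn i s.val) % 2 : ℕ) : ℝ)
      = ∑ γ : Fin t → Fin 2, ∏ i' ∈ If,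
          ((((β i').val + (γ i').val) % 2 : ℕ) : ℝ) := by
    intro β
    rw [hsum1]
    refine Finset.sum_congr rfl fun γ _ => ?_
    rw [hprodI]
    refine Finset.prod_congr rfl fun i' hi' => ?_
    rw [fe_val β i', fe_val γ i']
  rw [Finset.sum_congr rfl (fun β _ => hstep β)]
  -- pair the two sums into one over Fin t → Fin 2 × Fin 2
  have hpair : ∑ β : Fin t → Fin 2, ∑ γ : Fin t → Fin 2,
      ∏ i' ∈ If, ((((β i').val + (γ i').val) % 2 : ℕ) : ℝ)
      = ∑ δ : Fin t → Fin 2 × Fin 2,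
          ∏ i' ∈ If, (((((δ i').1).val + ((δ i').2).val) % 2 : ℕ) : ℝ) := by
    rw [← Fintype.sum_prod_type']
    exact (Equiv.sum_comp (Equiv.arrowProdEquivProdArrow (Fin t) (fun _ => Fin 2) (fun _ => Fin 2))
      (fun p : (Fin t → Fin 2) × (Fin t → Fin 2) =>
        ∏ i' ∈ If, ((((p.1 i').val + (p.2 i').val) % 2 : ℕ) : ℝ))).symm
  rw [hpair]
  have hext : ∀ δ : Fin t → Fin 2 × Fin 2,
      ∏ i' ∈ If, (((((δ i').1).val + ((δ i').2).val) % 2 : ℕ) : ℝ)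
      = ∏ i' : Fin t, (if i' ∈ If then (((((δ i').1).val + ((δ i').2).val) % 2 : ℕ) : ℝ)
          else 1) := by
    intro δ
    rw [← Finset.prod_filter]
    congr 1
    ext i'
    simp
  rw [Finset.sum_congr rfl (fun δ _ => hext δ)]
  rw [show ∑ δ : Fin t → Fin 2 × Fin 2, ∏ i' : Fin t,
        (if i' ∈ If then (((((δ i').1).val + ((δ i').2).val) % 2 : ℕ) : ℝ) else 1)
      = ∏ i' : Fin t, ∑ p : Fin 2 × Fin 2,
        (if i' ∈ If then (((p.1.val + p.2.val) % 2 : ℕ) : ℝ) else 1) by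
    rw [Finset.prod_univ_sum, Fintype.piFinset_univ]]
  have hval : ∀ i' : Fin t, (∑ p : Fin 2 × Fin 2,
      (if i' ∈ If then (((p.1.val + p.2.val) % 2 : ℕ) : ℝ) else 1))
      = if i' ∈ If then 2 else 4 := by
    intro i'
    by_cases hi : i' ∈ If
    · simp only [hi, if_true]
      exact dd2_sum
    · simp only [hi, if_false]
      rw [Finset.sum_const, Finset.card_univ, Fintype.card_prod, Fintype.card_fin]
      norm_num
  rw [Finset.prod_congr rfl (fun i' _ => hval i'), Finset.prod_ite, Finset.prod_const,
    Finset.prod_const]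
  have e1 : univ.filter (fun i' : Fin t => i' ∈ If) = If := by ext i'; simp
  have e2 : (univ.filter (fun i' : Fin t => i' ∉ If)).card = t - If.card := by
    have h4 : univ.filter (fun i' : Fin t => i' ∉ If) = univ \ If := by ext i'; simp
    rw [h4, Finset.card_sdiff_of_subset (Finset.subset_univ _), Finset.card_univ, Fintype.card_fin]
  rw [e1, e2, hIcard]

lemma MI_eq_residues (t n : ℕ) (I : Finset ℕ) (hI : I ⊆ Finset.range t) :
    MI n I = ∑ r : Fin (2 ^ t), ∑ s : Fin (2 ^ t),
        ((cntf n (Nat.pow_pos (n := t) two_pos) r : ℝ)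
          * (cntf n (Nat.pow_pos (n := t) two_pos) s : ℝ))
        * ∏ i ∈ I, (((bitn i r.val + bitn i s.val) % 2 : ℕ) : ℝ) := by
  classical
  set hq := Nat.pow_pos (n := t) two_pos
  have hdd : ∀ (a b : Fin n), ∏ i ∈ I, dR i a b
      = ∏ i ∈ I, (((bitn i (rho hq a).val + bitn i (rho hq b).val) % 2 : ℕ) : ℝ) := by
    intro a b
    refine Finset.prod_congr rfl fun i hi => ?_
    have hit : i < t := Finset.mem_range.mp (hI hi)
    unfold dR rho
    rw [show ((⟨a.val % 2 ^ t, Nat.mod_lt _ hq⟩ : Fin (2 ^ t)) : ℕ) = a.val % 2 ^ t from rfl,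
      show ((⟨b.val % 2 ^ t, Nat.mod_lt _ hq⟩ : Fin (2 ^ t)) : ℕ) = b.val % 2 ^ t from rfl,
      bitn_mod_pow hit, bitn_mod_pow hit]
  unfold MI
  rw [Finset.sum_congr rfl (fun a _ => Finset.sum_congr rfl (fun b _ => hdd a b))]
  have h1 : ∀ a : Fin n,
      ∑ b : Fin n, ∏ i ∈ I, (((bitn i (rho hq a).val + bitn i (rho hq b).val) % 2 : ℕ) : ℝ)
      = ∑ s : Fin (2 ^ t), (cntf n hq s : ℝ)
          * ∏ i ∈ I, (((bitn i (rho hq a).val + bitn i s.val) % 2 : ℕ) : ℝ) :=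
    fun a => sum_rho hq
      (fun s => ∏ i ∈ I, (((bitn i (rho hq a).val + bitn i s.val) % 2 : ℕ) : ℝ))
  rw [Finset.sum_congr rfl (fun a _ => h1 a), Finset.sum_comm]
  have h2 : ∀ s : Fin (2 ^ t),
      ∑ a : Fin n, (cntf n hq s : ℝ)
        * ∏ i ∈ I, (((bitn i (rho hq a).val + bitn i s.val) % 2 : ℕ) : ℝ)
      = (cntf n hq s : ℝ) * ∑ r : Fin (2 ^ t), (cntf n hq r : ℝ)
          * ∏ i ∈ I, (((bitn i r.val + bitn i s.val) % 2 : ℕ) : ℝ) := by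
    intro s
    rw [← Finset.mul_sum,
      sum_rho hq (fun r => ∏ i ∈ I, (((bitn i r.val + bitn i s.val) % 2 : ℕ) : ℝ))]
  rw [Finset.sum_congr rfl (fun s _ => h2 s)]
  simp_rw [Finset.mul_sum]
  rw [Finset.sum_comm]
  exact Finset.sum_congr rfl fun r _ => Finset.sum_congr rfl fun s _ => by ring

lemma MI_close (t n : ℕ) (I : Finset ℕ) (hI : I ⊆ Finset.range t) (hqn : 2 ^ t ≤ n) :
    |MI n I - (n : ℝ) ^ 2 / 2 ^ I.card| ≤ 4 * n * ((2 : ℝ) ^ t) := by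
  classical
  have hq : 0 < 2 ^ t := Nat.pow_pos (n := t) two_pos
  set q : ℕ := 2 ^ t with hqdef
  set F : ℕ := n / q with hF
  have hd1 : q * F ≤ n := by rw [hF, mul_comm]; exact Nat.div_mul_le_self n q
  have hdm : q * F + n % q = n := by rw [hF]; exact Nat.div_add_mod n q
  have hmod : n % q < q := Nat.mod_lt n hq
  have hd2 : n < q * F + q := by omega
  have hqR : (0 : ℝ) < q := by exact_mod_cast hq
  have hd1R : (q : ℝ) * F ≤ n := by exact_mod_cast hd1
  have hd2R : (n : ℝ) < q * F + q := by exact_mod_cast hd2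
  have hnR : (0 : ℝ) ≤ n := Nat.cast_nonneg n
  have hFR : (0 : ℝ) ≤ F := Nat.cast_nonneg F
  set DD : Fin q → Fin q → ℝ :=
    fun r s => ∏ i ∈ I, (((bitn i r.val + bitn i s.val) % 2 : ℕ) : ℝ) with hDD
  have hDD0 : ∀ r s, 0 ≤ DD r s := fun r s =>
    Finset.prod_nonneg fun i _ => Nat.cast_nonneg _
  have hDD1 : ∀ r s, DD r s ≤ 1 := by
    intro r s
    refine Finset.prod_le_one (fun i _ => Nat.cast_nonneg _) (fun i _ => ?_)
    have h : (bitn i r.val + bitn i s.val) % 2 ≤ 1 := by omega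
    exact_mod_cast h
  have hcl : ∀ r, (F : ℝ) ≤ cntf n hq r := fun r => by exact_mod_cast cnt_lb n hq hqn r
  have hsum_cnt : ∑ r : Fin q, (cntf n hq r : ℝ) = n := by
    rw [← Nat.cast_sum]
    exact_mod_cast congrArg (fun m : ℕ => (m : ℝ)) (cnt_sum n hq)
  have hs : I.card ≤ t := by
    have h := Finset.card_le_card hI
    simpa using h
  have hMI := MI_eq_residues t n I hI
  have hP := P_eq t I hI
  have step1 : |MI n I - (F : ℝ) ^ 2 * (∑ r : Fin q, ∑ s : Fin q, DD r s)|
      ≤ 2 * (n : ℝ) * (q : ℝ) := by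
    rw [hMI]
    simp_rw [Finset.mul_sum]
    rw [← Finset.sum_sub_distrib]
    rw [Finset.sum_congr rfl fun x _ => (Finset.sum_sub_distrib _ _).symm]
    refine le_trans (Finset.abs_sum_le_sum_abs _ _) ?_
    have hptw : ∀ r : Fin q, |∑ s : Fin q,
        (((cntf n hq r : ℝ) * cntf n hq s) * DD r s - (F : ℝ) ^ 2 * DD r s)|
        ≤ ∑ s : Fin q, (((cntf n hq r : ℝ) * cntf n hq s) - (F : ℝ) ^ 2) := by
      intro r
      refine le_trans (Finset.abs_sum_le_sum_abs _ _) (Finset.sum_le_sum fun s _ => ?_)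
      have h1 : 0 ≤ ((cntf n hq r : ℝ) * cntf n hq s) - (F : ℝ) ^ 2 := by
        nlinarith [hcl r, hcl s, hFR]
      rw [← sub_mul, abs_mul, abs_of_nonneg h1]
      calc ((cntf n hq r : ℝ) * cntf n hq s - (F : ℝ) ^ 2) * |DD r s|
          ≤ ((cntf n hq r : ℝ) * cntf n hq s - (F : ℝ) ^ 2) * 1 := by
            refine mul_le_mul_of_nonneg_left ?_ h1
            rw [abs_of_nonneg (hDD0 r s)]
            exact hDD1 r s
        _ = _ := mul_one _
    refine le_trans (Finset.sum_le_sum fun r _ => hptw r) ?_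
    have einner : ∀ r : Fin q, ∑ s : Fin q,
        (((cntf n hq r : ℝ) * cntf n hq s) - (F : ℝ) ^ 2)
        = (cntf n hq r : ℝ) * n - q * F ^ 2 := by
      intro r
      rw [Finset.sum_sub_distrib, ← Finset.mul_sum, hsum_cnt, Finset.sum_const,
        Finset.card_univ, Fintype.card_fin, nsmul_eq_mul]
    rw [Finset.sum_congr rfl (fun r _ => einner r), Finset.sum_sub_distrib,
      ← Finset.sum_mul, hsum_cnt, Finset.sum_const, Finset.card_univ, Fintype.card_fin,
      nsmul_eq_mul]
    nlinarith [hd1R, hd2R, hnR, hqR, hFR]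
  have step2 : |(F : ℝ) ^ 2 * (∑ r : Fin q, ∑ s : Fin q, DD r s)
      - (n : ℝ) ^ 2 / 2 ^ I.card| ≤ 2 * (n : ℝ) * (q : ℝ) := by
    have hP' : (∑ r : Fin q, ∑ s : Fin q, DD r s)
        = 2 ^ I.card * 4 ^ (t - I.card) := hP
    rw [hP']
    have hA : (2 : ℝ) ^ I.card * 4 ^ (t - I.card) = (q : ℝ) ^ 2 / 2 ^ I.card := by
      have hq2 : (q : ℝ) = 2 ^ t := by rw [hqdef]; push_cast; ring
      rw [show (4 : ℝ) = 2 ^ 2 by norm_num, ← pow_mul, eq_div_iff (by positivity), hq2,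
        ← pow_mul, ← pow_add, ← pow_add]
      congr 1
      omega
    rw [hA, show (F : ℝ) ^ 2 * ((q : ℝ) ^ 2 / 2 ^ I.card)
        = ((q : ℝ) * F) ^ 2 / 2 ^ I.card by ring, div_sub_div_same, abs_div]
    have h2s : (1 : ℝ) ≤ |(2 : ℝ) ^ I.card| := by
      rw [abs_of_nonneg (by positivity : (0:ℝ) ≤ (2:ℝ) ^ I.card)]
      calc (1 : ℝ) = 1 ^ I.card := (one_pow _).symm
        _ ≤ 2 ^ I.card := pow_le_pow_left₀ (by norm_num) (by norm_num) _
    have habs : |((q : ℝ) * F) ^ 2 - (n : ℝ) ^ 2| ≤ 2 * (n : ℝ) * (q : ℝ) := by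
      rw [abs_le]
      constructor <;> nlinarith [hd1R, hd2R, hnR, hqR, hFR]
    calc |((q : ℝ) * F) ^ 2 - (n : ℝ) ^ 2| / |(2 : ℝ) ^ I.card|
        ≤ |((q : ℝ) * F) ^ 2 - (n : ℝ) ^ 2| := div_le_self (abs_nonneg _) h2s
      _ ≤ 2 * (n : ℝ) * (q : ℝ) := habs
  calc |MI n I - (n : ℝ) ^ 2 / 2 ^ I.card|
      ≤ |MI n I - (F : ℝ) ^ 2 * (∑ r : Fin q, ∑ s : Fin q, DD r s)|
        + |(F : ℝ) ^ 2 * (∑ r : Fin q, ∑ s : Fin q, DD r s) - (n : ℝ) ^ 2 / 2 ^ I.card| :=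
        abs_sub_le _ _ _
    _ ≤ 2 * (n : ℝ) * (q : ℝ) + 2 * (n : ℝ) * (q : ℝ) := add_le_add step1 step2
    _ = 4 * n * ((2 : ℝ) ^ t) := by
        have hq2 : (q : ℝ) = 2 ^ t := by rw [hqdef]; push_cast; ring
        rw [← hq2]; ring
-- ===== Chunk H3: assembling the Dev(ℓ) estimate =====

lemma abs_pow_sub_pow_le (a b C : ℝ) (ha : 0 ≤ a) (hb : 0 ≤ b) (haC : a ≤ C) (hbC : b ≤ C) :
    ∀ L : ℕ, |a ^ L - b ^ L| ≤ L * C ^ (L - 1) * |a - b| := by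
  intro L
  induction L with
  | zero => simp
  | succ L ih =>
    have hC : 0 ≤ C := le_trans ha haC
    have key : a ^ (L + 1) - b ^ (L + 1) = a ^ L * (a - b) + b * (a ^ L - b ^ L) := by ring
    have habs : 0 ≤ |a - b| := abs_nonneg _
    have hCL : 0 ≤ C ^ L := pow_nonneg hC L
    have hstep : C * (L * C ^ (L - 1)) ≤ L * C ^ L := by
      cases L with
      | zero => simp
      | succ M =>
        rw [show M + 1 - 1 = M from rfl, pow_succ]
        nlinarith [pow_nonneg hC M]
    calc |a ^ (L + 1) - b ^ (L + 1)|
        ≤ |a ^ L * (a - b)| + |b * (a ^ L - b ^ L)| := by rw [key]; exact abs_add_le _ _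
      _ = a ^ L * |a - b| + b * |a ^ L - b ^ L| := by
          rw [abs_mul, abs_mul, abs_of_nonneg (pow_nonneg ha L), abs_of_nonneg hb]
      _ ≤ C ^ L * |a - b| + C * (L * C ^ (L - 1) * |a - b|) := by
          refine add_le_add ?_ ?_
          · exact mul_le_mul_of_nonneg_right (pow_le_pow_left₀ ha haC L) habs
          · refine mul_le_mul hbC ih (abs_nonneg _) hC
      _ ≤ (↑(L + 1)) * C ^ (L + 1 - 1) * |a - b| := by
          rw [show L + 1 - 1 = L from rfl]
          push_cast
          nlinarith [hstep, habs, hCL]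

lemma powerset_sum_pow (c : ℝ) (t : ℕ) :
    ∑ I ∈ (Finset.range t).powerset, c ^ I.card = (1 + c) ^ t := by
  calc ∑ I ∈ (Finset.range t).powerset, c ^ I.card
      = ∑ I ∈ (Finset.range t).powerset, (∏ _i ∈ I, c) * ∏ _i ∈ Finset.range t \ I, (1 : ℝ) := by
        refine Finset.sum_congr rfl fun I hI => ?_
        rw [Finset.prod_const, Finset.prod_const_one, mul_one]
    _ = ∏ _i ∈ Finset.range t, (c + 1) := (Finset.prod_add _ _ _).symm
    _ = (1 + c) ^ t := by rw [Finset.prod_const, Finset.card_range, add_comm]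

lemma main_sum (t n L : ℕ) :
    ∑ I ∈ (Finset.range t).powerset, (-2 : ℝ) ^ I.card * ((n : ℝ) ^ 2 / 2 ^ I.card) ^ L
      = ((n : ℝ) ^ 2) ^ L * (1 - 2 / 2 ^ L) ^ t := by
  have h1 : ∀ I ∈ (Finset.range t).powerset,
      (-2 : ℝ) ^ I.card * ((n : ℝ) ^ 2 / 2 ^ I.card) ^ L
      = ((n : ℝ) ^ 2) ^ L * ((-2) / 2 ^ L) ^ I.card := by
    intro I _
    have e1 : ((n : ℝ) ^ 2 / 2 ^ I.card) ^ L = ((n : ℝ) ^ 2) ^ L / 2 ^ (I.card * L) := by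
      rw [div_pow, pow_mul]
    have e2 : ((-2 : ℝ) / 2 ^ L) ^ I.card = (-2 : ℝ) ^ I.card / 2 ^ (L * I.card) := by
      rw [div_pow, pow_mul]
    rw [e1, e2, mul_comm L I.card]
    ring
  rw [Finset.sum_congr rfl h1, ← Finset.mul_sum, powerset_sum_pow ((-2) / 2 ^ L) t]
  congr 2
  ring

lemma sum_GF_bound (n L : ℕ) (hL : 1 ≤ L) (hn : 1 ≤ n) :
    |∑ y : Fin L × Fin 2 → Fin n, GF (tf n) y|
      ≤ ((n : ℝ) ^ 2) ^ L * (1 - 2 / 2 ^ L) ^ (tf n)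
        + 5 * L * ((2 : ℝ) ^ (tf n)) ^ 3 * (n : ℝ) ^ (2 * L - 1) := by
  set t := tf n with htdef
  have hqn : 2 ^ t ≤ n := q_le_self hn
  rw [sum_GF_expand]
  have htri : |∑ I ∈ (Finset.range t).powerset, (-2 : ℝ) ^ I.card * (MI n I) ^ L|
      ≤ |∑ I ∈ (Finset.range t).powerset, (-2 : ℝ) ^ I.card * ((n : ℝ) ^ 2 / 2 ^ I.card) ^ L|
        + ∑ I ∈ (Finset.range t).powerset,
            |(-2 : ℝ) ^ I.card * (MI n I) ^ L
              - (-2 : ℝ) ^ I.card * ((n : ℝ) ^ 2 / 2 ^ I.card) ^ L| := by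
    have h0 : ∑ I ∈ (Finset.range t).powerset, (-2 : ℝ) ^ I.card * (MI n I) ^ L
        = (∑ I ∈ (Finset.range t).powerset, (-2 : ℝ) ^ I.card * ((n : ℝ) ^ 2 / 2 ^ I.card) ^ L)
          + ∑ I ∈ (Finset.range t).powerset,
              ((-2 : ℝ) ^ I.card * (MI n I) ^ L
                - (-2 : ℝ) ^ I.card * ((n : ℝ) ^ 2 / 2 ^ I.card) ^ L) := by
      rw [← Finset.sum_add_distrib]
      refine Finset.sum_congr rfl fun I _ => by ring
    rw [h0]
    exact le_trans (abs_add_le _ _) (add_le_add le_rfl (Finset.abs_sum_le_sum_abs _ _))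
  refine le_trans htri ?_
  have hmain : |∑ I ∈ (Finset.range t).powerset,
      (-2 : ℝ) ^ I.card * ((n : ℝ) ^ 2 / 2 ^ I.card) ^ L|
      ≤ ((n : ℝ) ^ 2) ^ L * (1 - 2 / 2 ^ L) ^ t := by
    have hlam : (0 : ℝ) ≤ 1 - 2 / 2 ^ L := by
      have h2 : (2 : ℝ) ≤ 2 ^ L := by
        calc (2 : ℝ) = 2 ^ 1 := (pow_one 2).symm
          _ ≤ 2 ^ L := pow_le_pow_right₀ (by norm_num) hL
      have hpos : (0 : ℝ) < 2 ^ L := by positivity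
      rw [sub_nonneg, div_le_one hpos]
      exact h2
    rw [main_sum, abs_of_nonneg (mul_nonneg (by positivity) (pow_nonneg hlam (tf n)))]
  have herr : ∑ I ∈ (Finset.range t).powerset,
      |(-2 : ℝ) ^ I.card * (MI n I) ^ L - (-2 : ℝ) ^ I.card * ((n : ℝ) ^ 2 / 2 ^ I.card) ^ L|
      ≤ 5 * L * ((2 : ℝ) ^ t) ^ 3 * (n : ℝ) ^ (2 * L - 1) := by
    have hper : ∀ I ∈ (Finset.range t).powerset,
        |(-2 : ℝ) ^ I.card * (MI n I) ^ L - (-2 : ℝ) ^ I.card * ((n : ℝ) ^ 2 / 2 ^ I.card) ^ L|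
        ≤ 2 ^ I.card * (L * ((n : ℝ) ^ 2) ^ (L - 1) * (4 * n * ((2 : ℝ) ^ t))) := by
      intro I hI
      have hIr : I ⊆ Finset.range t := Finset.mem_powerset.mp hI
      rw [← mul_sub, abs_mul, abs_pow, abs_neg, abs_two]
      refine mul_le_mul_of_nonneg_left ?_ (by positivity)
      have hM0 : 0 ≤ MI n I := MI_nonneg n I
      have hM1 : MI n I ≤ (n : ℝ) ^ 2 := MI_le_sq n I
      have hb0 : 0 ≤ (n : ℝ) ^ 2 / 2 ^ I.card := by positivity
      have hb1 : (n : ℝ) ^ 2 / 2 ^ I.card ≤ (n : ℝ) ^ 2 := by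
        refine div_le_self (by positivity) ?_
        calc (1 : ℝ) = 1 ^ I.card := (one_pow _).symm
          _ ≤ 2 ^ I.card := pow_le_pow_left₀ (by norm_num) (by norm_num) _
      refine le_trans (abs_pow_sub_pow_le _ _ ((n : ℝ) ^ 2) hM0 hb0 hM1 hb1 L) ?_
      refine mul_le_mul_of_nonneg_left ?_ (by positivity)
      exact MI_close t n I hIr hqn
    refine le_trans (Finset.sum_le_sum hper) ?_
    rw [← Finset.sum_mul]
    have h3t : ∑ I ∈ (Finset.range t).powerset, (2 : ℝ) ^ I.card = 3 ^ t := by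
      rw [powerset_sum_pow]; norm_num
    rw [h3t]
    have h34 : (3 : ℝ) ^ t ≤ ((2 : ℝ) ^ t) ^ 2 := by
      rw [← pow_mul, mul_comm, pow_mul]
      refine pow_le_pow_left₀ (by norm_num) (by norm_num) t
    have hrhs : (0 : ℝ) ≤ L * ((n : ℝ) ^ 2) ^ (L - 1) * (4 * n * ((2 : ℝ) ^ t)) := by positivity
    have hstep : (3 : ℝ) ^ t * (L * ((n : ℝ) ^ 2) ^ (L - 1) * (4 * n * ((2 : ℝ) ^ t)))
        ≤ ((2 : ℝ) ^ t) ^ 2 * (L * ((n : ℝ) ^ 2) ^ (L - 1) * (4 * n * ((2 : ℝ) ^ t))) :=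
      mul_le_mul_of_nonneg_right h34 hrhs
    refine le_trans hstep ?_
    have hnn : ((n : ℝ) ^ 2) ^ (L - 1) * n = (n : ℝ) ^ (2 * L - 1) := by
      rw [← pow_mul, ← pow_succ]
      congr 1
      omega
    calc ((2 : ℝ) ^ t) ^ 2 * (L * ((n : ℝ) ^ 2) ^ (L - 1) * (4 * n * ((2 : ℝ) ^ t)))
        = 4 * L * (((n : ℝ) ^ 2) ^ (L - 1) * n) * ((2 : ℝ) ^ t) ^ 3 := by ring
      _ = 4 * L * (n : ℝ) ^ (2 * L - 1) * ((2 : ℝ) ^ t) ^ 3 := by rw [hnn]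
      _ ≤ 5 * L * ((2 : ℝ) ^ t) ^ 3 * (n : ℝ) ^ (2 * L - 1) := by
          have h1 : (0:ℝ) ≤ (L : ℝ) * (((2 : ℝ) ^ t) ^ 3 * (n : ℝ) ^ (2 * L - 1)) := by
            positivity
          nlinarith [h1]
  linarith [hmain, herr]
-- ===== Chunk H4: final assembly for Dev(ℓ) =====

lemma devSum_upper' (k L n : ℕ) (hL1 : 1 ≤ L) (hLk : L ≤ k) (hn : 1 ≤ n) :
    |devSum k L (Hc k L n)|
      ≤ (n : ℝ) ^ (k - L) * (((n : ℝ) ^ 2) ^ L * (1 - 2 / 2 ^ L) ^ (tf n)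
          + 5 * L * ((2 : ℝ) ^ (tf n)) ^ 3 * (n : ℝ) ^ (2 * L - 1))
        + 2 * (((k + L : ℕ) : ℝ) ^ 2 * (n : ℝ) ^ (k + L - 1)) := by
  classical
  rw [devSum_eq_sum_fun]
  set σ := (Fin (k - L) ⊕ Fin L × Fin 2) with hσ
  set S := ∑ f : σ → Fin n,
    (-1 : ℝ) ^ ((octSet k L (f ∘ Sum.inl) (f ∘ Sum.inr) ∩ Hc k L n).card) with hS
  set T := ∑ f : σ → Fin n, GF (tf n) (f ∘ Sum.inr) with hT
  have hTd : T = (n : ℝ) ^ (k - L) * ∑ y : Fin L × Fin 2 → Fin n, GF (tf n) y :=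
    sum_fun_eq_sum_pair k L _
  have hdiff : |S - T| ≤ 2 * (((k + L : ℕ) : ℝ) ^ 2 * (n : ℝ) ^ (k + L - 1)) := by
    rw [hS, hT, ← Finset.sum_sub_distrib]
    set D : (σ → Fin n) → ℝ := fun f =>
      (-1 : ℝ) ^ ((octSet k L (f ∘ Sum.inl) (f ∘ Sum.inr) ∩ Hc k L n).card)
        - GF (tf n) (f ∘ Sum.inr) with hD
    have hzero : ∀ f : σ → Fin n, Function.Injective f → D f = 0 := by
      intro f hf
      rw [hD]
      simp only
      rw [good_term_C hL1 hLk (by rw [Sum.elim_comp_inl_inr f]; exact hf), sub_self]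
    have hDb : ∀ f : σ → Fin n, |D f| ≤ 2 := by
      intro f
      rw [hD]
      simp only
      have h1 : |(-1 : ℝ) ^ ((octSet k L (f ∘ Sum.inl) (f ∘ Sum.inr) ∩ Hc k L n).card)| = 1 := by
        rw [abs_pow, abs_neg, abs_one, one_pow]
      have h2 := GF_abs_le_one (tf n) (f ∘ Sum.inr)
      calc |(-1 : ℝ) ^ ((octSet k L (f ∘ Sum.inl) (f ∘ Sum.inr) ∩ Hc k L n).card)
            - GF (tf n) (f ∘ Sum.inr)|
          ≤ |(-1 : ℝ) ^ ((octSet k L (f ∘ Sum.inl) (f ∘ Sum.inr) ∩ Hc k L n).card)|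
            + |GF (tf n) (f ∘ Sum.inr)| := abs_sub _ _
        _ ≤ 1 + 1 := by rw [h1]; exact add_le_add le_rfl h2
        _ = 2 := by norm_num
    rw [← Finset.sum_filter_add_sum_filter_not univ
      (fun f : σ → Fin n => Function.Injective f) D]
    rw [Finset.sum_eq_zero (fun f hf => hzero f (Finset.mem_filter.mp hf).2), zero_add]
    refine le_trans (Finset.abs_sum_le_sum_abs _ _) ?_
    refine le_trans (Finset.sum_le_sum (fun f _ => hDb f)) ?_
    rw [Finset.sum_const, nsmul_eq_mul]
    have hcb := card_noninj σ (Fin n)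
    rw [card_sum_idx k L hLk, Fintype.card_fin] at hcb
    have hcbR : ((univ.filter (fun f : σ → Fin n => ¬ Function.Injective f)).card : ℝ)
        ≤ ((k + L : ℕ) : ℝ) ^ 2 * (n : ℝ) ^ (k + L - 1) := by
      have h3 : (((k + L) ^ 2 * n ^ (k + L - 1) : ℕ) : ℝ)
          = ((k + L : ℕ) : ℝ) ^ 2 * (n : ℝ) ^ (k + L - 1) := by push_cast; ring
      rw [← h3]
      exact_mod_cast hcb
    calc ((univ.filter (fun f : σ → Fin n => ¬ Function.Injective f)).card : ℝ) * 2
        ≤ (((k + L : ℕ) : ℝ) ^ 2 * (n : ℝ) ^ (k + L - 1)) * 2 := by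
          refine mul_le_mul_of_nonneg_right hcbR (by norm_num)
      _ = 2 * (((k + L : ℕ) : ℝ) ^ 2 * (n : ℝ) ^ (k + L - 1)) := by ring
  have hTb : |T| ≤ (n : ℝ) ^ (k - L) * (((n : ℝ) ^ 2) ^ L * (1 - 2 / 2 ^ L) ^ (tf n)
      + 5 * L * ((2 : ℝ) ^ (tf n)) ^ 3 * (n : ℝ) ^ (2 * L - 1)) := by
    rw [hTd, abs_mul, abs_of_nonneg (by positivity : (0:ℝ) ≤ (n : ℝ) ^ (k - L))]
    exact mul_le_mul_of_nonneg_left (sum_GF_bound n L hL1 hn) (by positivity)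
  calc |S| ≤ |T| + |S - T| := by
        have h := abs_add_le T (S - T)
        simpa using h
    _ ≤ _ := add_le_add hTb hdiff

theorem devHolds (k L : ℕ) (hL2 : 2 ≤ L) (hLk1 : L + 1 ≤ k) : Dev k L (Hc k L) := by
  unfold Dev
  rw [isLittleO_iff]
  intro c hc
  have hL1 : 1 ≤ L := by omega
  have hLk : L ≤ k := by omega
  set lam : ℝ := 1 - 2 / 2 ^ L with hlam
  have h2L : (2 : ℝ) ≤ 2 ^ L := by
    calc (2 : ℝ) = 2 ^ 1 := (pow_one 2).symm
      _ ≤ 2 ^ L := pow_le_pow_right₀ (by norm_num) hL1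
  have hpos2L : (0 : ℝ) < 2 ^ L := by positivity
  have hlam0 : 0 ≤ lam := by
    rw [hlam, sub_nonneg, div_le_one hpos2L]; exact h2L
  have hlam1 : lam < 1 := by
    rw [hlam]
    have : (0 : ℝ) < 2 / 2 ^ L := by positivity
    linarith
  have htend : Filter.Tendsto (fun m : ℕ => lam ^ m) atTop (nhds 0) :=
    tendsto_pow_atTop_nhds_zero_of_lt_one hlam0 hlam1
  have hE1 : ∀ᶠ n : ℕ in atTop, lam ^ (tf n) < c / 3 :=
    (htend.comp tf_tendsto).eventually (gt_mem_nhds (by positivity : (0 : ℝ) < c / 3))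
  set K : ℝ := 15 * L / c with hK
  have hK0 : 0 ≤ K := by positivity
  have hE2' : ∀ᶠ n : ℕ in atTop, K ^ 2 ≤ (n : ℝ) :=
    tendsto_natCast_atTop_atTop.eventually_ge_atTop (K ^ 2)
  have hE3 : ∀ᶠ n : ℕ in atTop, 2 * ((k + L : ℕ) : ℝ) ^ 2 ≤ c / 3 * n := by
    have ht : Filter.Tendsto (fun n : ℕ => c / 3 * (n : ℝ)) atTop atTop :=
      Filter.Tendsto.const_mul_atTop (by positivity) tendsto_natCast_atTop_atTop
    exact ht.eventually_ge_atTop _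
  have hE4 : ∀ᶠ n : ℕ in atTop, 1 ≤ n := Filter.eventually_ge_atTop 1
  filter_upwards [hE1, hE2', hE3, hE4] with n h1 h2 h3 h4
  rw [Real.norm_eq_abs, Real.norm_eq_abs,
    abs_of_nonneg (by positivity : (0 : ℝ) ≤ (n : ℝ) ^ (k + L))]
  have hub := devSum_upper' k L n hL1 hLk h4
  -- exponent bookkeeping
  have he1 : (n : ℝ) ^ (k - L) * ((n : ℝ) ^ 2) ^ L = (n : ℝ) ^ (k + L) := by
    rw [← pow_mul, ← pow_add]
    congr 1
    omega
  have he2 : (n : ℝ) ^ (k - L) * (n : ℝ) ^ (2 * L - 1) = (n : ℝ) ^ (k + L - 1) := by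
    rw [← pow_add]
    congr 1
    omega
  have he3 : (n : ℝ) * (n : ℝ) ^ (k + L - 1) = (n : ℝ) ^ (k + L) := by
    rw [← pow_succ']
    congr 1
    omega
  -- bound each of three pieces
  have hu : 0 ≤ ((2 : ℝ) ^ (tf n)) ^ 3 := by positivity
  have hq2 : (((2 : ℝ) ^ (tf n)) ^ 3) ^ 2 ≤ (n : ℝ) := by
    have hnat := qcube_sq_le h4
    have hcast : (((2 ^ tf n) ^ 3) ^ 2 : ℕ) = ((((2 : ℕ) ^ tf n) ^ 3) ^ 2 : ℕ) := rfl
    calc (((2 : ℝ) ^ (tf n)) ^ 3) ^ 2 = ((((2 ^ tf n) ^ 3) ^ 2 : ℕ) : ℝ) := by push_cast; ring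
      _ ≤ (n : ℝ) := by exact_mod_cast hnat
  have hKu : K * ((2 : ℝ) ^ (tf n)) ^ 3 ≤ (n : ℝ) := by
    nlinarith [sq_nonneg (K - ((2 : ℝ) ^ (tf n)) ^ 3), hq2, h2, hK0, hu]
  have hterm2 : 5 * (L : ℝ) * ((2 : ℝ) ^ (tf n)) ^ 3 ≤ c / 3 * n := by
    have hcK : c / 3 * K = 5 * L := by
      rw [hK]
      field_simp
      ring
    calc 5 * (L : ℝ) * ((2 : ℝ) ^ (tf n)) ^ 3 = c / 3 * (K * ((2 : ℝ) ^ (tf n)) ^ 3) := by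
          rw [← mul_assoc, hcK]
      _ ≤ c / 3 * n := by
          refine mul_le_mul_of_nonneg_left hKu (by positivity)
  have hnp : (0 : ℝ) ≤ (n : ℝ) ^ (k + L - 1) := by positivity
  have hnp2 : (0 : ℝ) ≤ (n : ℝ) ^ (k + L) := by positivity
  calc |devSum k L (Hc k L n)|
      ≤ (n : ℝ) ^ (k - L) * (((n : ℝ) ^ 2) ^ L * lam ^ (tf n)
          + 5 * L * ((2 : ℝ) ^ (tf n)) ^ 3 * (n : ℝ) ^ (2 * L - 1))
        + 2 * (((k + L : ℕ) : ℝ) ^ 2 * (n : ℝ) ^ (k + L - 1)) := hub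
    _ = lam ^ (tf n) * (n : ℝ) ^ (k + L)
        + (5 * L * ((2 : ℝ) ^ (tf n)) ^ 3) * (n : ℝ) ^ (k + L - 1)
        + (2 * ((k + L : ℕ) : ℝ) ^ 2) * (n : ℝ) ^ (k + L - 1) := by
          rw [mul_add, ← mul_assoc ((n : ℝ) ^ (k - L)), he1]
          rw [show (n : ℝ) ^ (k - L) * (5 * L * ((2 : ℝ) ^ (tf n)) ^ 3 * (n : ℝ) ^ (2 * L - 1))
              = (5 * L * ((2 : ℝ) ^ (tf n)) ^ 3)
                * ((n : ℝ) ^ (k - L) * (n : ℝ) ^ (2 * L - 1)) by ring, he2]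
          ring
    _ ≤ (c / 3) * (n : ℝ) ^ (k + L) + (c / 3 * n) * (n : ℝ) ^ (k + L - 1)
        + (c / 3 * n) * (n : ℝ) ^ (k + L - 1) := by
          refine add_le_add (add_le_add ?_ ?_) ?_
          · exact mul_le_mul_of_nonneg_right (le_of_lt h1) hnp2
          · exact mul_le_mul_of_nonneg_right hterm2 hnp
          · exact mul_le_mul_of_nonneg_right h3 hnp
    _ = (c / 3) * (n : ℝ) ^ (k + L) + (c / 3) * ((n : ℝ) * (n : ℝ) ^ (k + L - 1))
        + (c / 3) * ((n : ℝ) * (n : ℝ) ^ (k + L - 1)) := by ring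
    _ = c * (n : ℝ) ^ (k + L) := by rw [he3]; ring

end DevC

/-- `Dev(ℓ)` does not imply `Dev(ℓ+1)` for `2 ≤ ℓ ≤ k-1`. -/
theorem dev_not_implies_dev_succ (k ℓ : ℕ) (hk : 3 ≤ k) (hℓ2 : 2 ≤ ℓ) (hℓk : ℓ ≤ k - 1) :
    ∃ H : HSeq, UniformSeq k H ∧ Dev k ℓ H ∧ ¬ Dev k (ℓ + 1) H := by
  refine ⟨DevC.Hc k ℓ, DevC.Hc_uniform k ℓ, DevC.devHolds k ℓ hℓ2 (by omega), ?_⟩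
  intro h
  exact DevC.notDevB k ℓ (by omega) h
end

section
/- Let k ≥ 2, let 0 < p < 1, and let π be a proper partition of k. Every hypergraph sequence satisfying PartiteExpand_p(π) also satisfies Expand_p(π). -/
open Filter Finset Asymptotics

/-- Number of colorings forced to agree with `F` on `u`. -/
lemma card_forced {n t : ℕ} (u : Finset (Fin n)) (F : Fin n → Fin t) :
    (Finset.univ.filter (fun c : Fin n → Fin t => ∀ v ∈ u, c v = F v)).card
      = t ^ (n - u.card) := by
  classical
  have hset : Finset.univ.filter (fun c : Fin n → Fin t => ∀ v ∈ u, c v = F v)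
      = Fintype.piFinset (fun v => if v ∈ u then {F v} else Finset.univ) := by
    ext c
    simp only [Finset.mem_filter, Finset.mem_univ, true_and, Fintype.mem_piFinset]
    constructor
    · intro h v
      split <;> simp_all
    · intro h v hv
      have := h v
      rw [if_pos hv] at this
      simpa using this
  rw [hset, Fintype.card_piFinset]
  have : ∀ v : Fin n, (if v ∈ u then ({F v} : Finset (Fin t)) else Finset.univ).card
      = if v ∈ u then 1 else t := by
    intro v; split <;> simp
  rw [Finset.prod_congr rfl (fun v _ => this v), Finset.prod_ite, Finset.prod_const_one,
    Finset.prod_const, one_mul]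
  congr 1
  have : Finset.univ.filter (fun v : Fin n => ¬ v ∈ u) = uᶜ := by ext v; simp
  rw [this, Finset.card_compl, Fintype.card_fin]

lemma count_colorings {n t : ℕ} (ht : 0 < t) (s : Fin t → Finset (Fin n))
    (hdisj : ∀ i j, i ≠ j → Disjoint (s i) (s j)) :
    (Finset.univ.filter (fun c : Fin n → Fin t => ∀ i, ∀ v ∈ s i, c v = i)).card
      = t ^ (n - ∑ i, (s i).card) := by
  classical
  set u := Finset.univ.biUnion s with hu
  set F : Fin n → Fin t := fun v =>
    if h : ∃ i, v ∈ s i then h.choose else ⟨0, ht⟩ with hF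
  have hFval : ∀ i, ∀ v ∈ s i, F v = i := by
    intro i v hv
    have hex : ∃ i, v ∈ s i := ⟨i, hv⟩
    simp only [hF, dif_pos hex]
    by_contra hne
    exact (Finset.disjoint_left.mp (hdisj _ i hne) hex.choose_spec) hv
  have hiff : ∀ c : Fin n → Fin t,
      (∀ i, ∀ v ∈ s i, c v = i) ↔ (∀ v ∈ u, c v = F v) := by
    intro c
    constructor
    · intro h v hv
      obtain ⟨i, _, hi⟩ := Finset.mem_biUnion.mp hv
      rw [h i v hi, hFval i v hi]
    · intro h i v hv
      have hvu : v ∈ u := Finset.mem_biUnion.mpr ⟨i, Finset.mem_univ i, hv⟩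
      rw [h v hvu, hFval i v hv]
  have : Finset.univ.filter (fun c : Fin n → Fin t => ∀ i, ∀ v ∈ s i, c v = i)
      = Finset.univ.filter (fun c : Fin n → Fin t => ∀ v ∈ u, c v = F v) := by
    ext c; simp only [Finset.mem_filter, hiff]
  rw [this, card_forced]
  congr 1
  rw [hu, Finset.card_biUnion (fun i _ j _ hij => hdisj i j hij)]

lemma count_colorings_zero {n t : ℕ} (s : Fin t → Finset (Fin n)) (i j : Fin t)
    (hij : i ≠ j) (v : Fin n) (hvi : v ∈ s i) (hvj : v ∈ s j) :
    (Finset.univ.filter (fun c : Fin n → Fin t => ∀ i, ∀ v ∈ s i, c v = i)) = ∅ := by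
  classical
  rw [Finset.filter_eq_empty_iff]
  intro c _ hc
  exact hij ((hc i v hvi).symm.trans (hc j v hvj))

lemma disjoint_of_card_biUnion {n t : ℕ} (s : Fin t → Finset (Fin n))
    (h : (Finset.univ.biUnion s).card = ∑ i, (s i).card) :
    ∀ i j, i ≠ j → Disjoint (s i) (s j) := by
  classical
  intro i j hij
  by_contra hnd
  obtain ⟨v, hv⟩ := Finset.not_disjoint_iff_nonempty_inter.mp hnd
  have hvi : v ∈ s i := Finset.mem_inter.mp hv |>.1
  have hvj : v ∈ s j := Finset.mem_inter.mp hv |>.2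
  set s' : Fin t → Finset (Fin n) := Function.update s j ((s j).erase v) with hs'
  have hub : Finset.univ.biUnion s = Finset.univ.biUnion s' := by
    apply Finset.Subset.antisymm
    · intro w hw
      obtain ⟨l, _, hl⟩ := Finset.mem_biUnion.mp hw
      by_cases hlj : l = j
      · subst hlj
        by_cases hwv : w = v
        · subst hwv
          refine Finset.mem_biUnion.mpr ⟨i, Finset.mem_univ i, ?_⟩
          simp [hs', Function.update_of_ne hij, hvi]
        · refine Finset.mem_biUnion.mpr ⟨l, Finset.mem_univ l, ?_⟩
          simp [hs', Finset.mem_erase, hwv, hl]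
      · refine Finset.mem_biUnion.mpr ⟨l, Finset.mem_univ l, ?_⟩
        simp [hs', Function.update_of_ne hlj, hl]
    · intro w hw
      obtain ⟨l, _, hl⟩ := Finset.mem_biUnion.mp hw
      refine Finset.mem_biUnion.mpr ⟨l, Finset.mem_univ l, ?_⟩
      by_cases hlj : l = j
      · subst hlj
        simp only [hs', Function.update_self] at hl
        exact Finset.erase_subset _ _ hl
      · simpa [hs', Function.update_of_ne hlj] using hl
  have hle : (Finset.univ.biUnion s').card ≤ ∑ l, (s' l).card :=
    Finset.card_biUnion_le
  have hsum' : ∑ l, (s' l).card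
      = (s j).card - 1 + ∑ l ∈ Finset.univ.erase j, (s l).card := by
    rw [← Finset.add_sum_erase _ (fun l => (s' l).card) (Finset.mem_univ j)]
    have h1 : (s' j).card = (s j).card - 1 := by
      simp [hs', Finset.card_erase_of_mem hvj]
    have h2 : ∑ l ∈ Finset.univ.erase j, (s' l).card
        = ∑ l ∈ Finset.univ.erase j, (s l).card := by
      refine Finset.sum_congr rfl fun l hl => ?_
      rw [hs', Function.update_of_ne (Finset.ne_of_mem_erase hl)]
    rw [h1, h2]
  have hsum : ∑ l, (s l).card = (s j).card + ∑ l ∈ Finset.univ.erase j, (s l).card := by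
    rw [Finset.add_sum_erase _ (fun l => (s l).card) (Finset.mem_univ j)]
  have hjpos : 1 ≤ (s j).card := Finset.card_pos.mpr ⟨v, hvj⟩
  rw [hub] at h
  omega

lemma pair_bound {n t k : ℕ} (κ : Fin t → ℕ) (hκ : ∀ i, 1 ≤ κ i)
    (hsum : ∑ i, κ i = k) (S : Fin t → Finset (Finset (Fin n)))
    (hS : ∀ i, ∀ s ∈ S i, s.card = κ i) (i j : Fin t) (hij : i ≠ j) :
    ((Fintype.piFinset S).filter
      (fun s => ¬ Disjoint (s i) (s j))).card ≤ n ^ (k - 1) := by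
  classical
  rcases Nat.eq_zero_or_pos n with hn | hn
  · subst hn
    have hA : Fintype.piFinset S = ∅ := by
      rw [Finset.eq_empty_iff_forall_notMem]
      intro s hs
      have := hS i (s i) (Fintype.mem_piFinset.mp hs i)
      have h0 : (s i).card = 0 := by
        have : s i ⊆ (∅ : Finset (Fin 0)) := by
          intro x _; exact absurd x.isLt (by omega)
        simpa [Finset.card_eq_zero] using Finset.subset_empty.mp this ▸ rfl
      have := hκ i; omega
    simp [hA]
  haveI : Nonempty (Fin n) := ⟨⟨0, hn⟩⟩
  set m : Fin t → ℕ := fun l => if l = i ∨ l = j then κ l - 1 else κ l with hm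
  set ψ : (Fin t → Finset (Fin n)) → Fin n × (Fin t → Finset (Fin n)) := fun s =>
    (if h : (s i ∩ s j).Nonempty then
      (h.choose, fun l => if l = i ∨ l = j then (s l).erase h.choose else s l)
    else (Classical.arbitrary _, s)) with hψ
  set T : Finset (Fin n × (Fin t → Finset (Fin n))) :=
    Finset.univ ×ˢ Fintype.piFinset
      (fun l => Finset.powersetCard (m l) (Finset.univ : Finset (Fin n))) with hT
  have hcard : ((Fintype.piFinset S).filter
      (fun s => ¬ Disjoint (s i) (s j))).card ≤ T.card := by
    apply Finset.card_le_card_of_injOn ψ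
    · intro s hs
      obtain ⟨hsA, hnd⟩ := Finset.mem_filter.mp hs
      have hne : (s i ∩ s j).Nonempty :=
        Finset.not_disjoint_iff_nonempty_inter.mp hnd
      have hv := hne.choose_spec
      have hvi : hne.choose ∈ s i := (Finset.mem_inter.mp hv).1
      have hvj : hne.choose ∈ s j := (Finset.mem_inter.mp hv).2
      rw [hψ]
      simp only [dif_pos hne]
      refine Finset.mem_product.mpr ⟨Finset.mem_univ _, ?_⟩
      rw [Fintype.mem_piFinset]
      intro l
      rw [Finset.mem_powersetCard]
      refine ⟨Finset.subset_univ _, ?_⟩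
      have hcardl : (s l).card = κ l := hS l (s l) (Fintype.mem_piFinset.mp hsA l)
      show (if l = i ∨ l = j then (s l).erase hne.choose else s l).card = m l
      rw [hm]
      by_cases hl : l = i ∨ l = j
      · have hvl : hne.choose ∈ s l := by rcases hl with h | h <;> subst h <;> assumption
        simp only [if_pos hl]
        rw [Finset.card_erase_of_mem hvl, hcardl]
      · simp only [if_neg hl]
        exact hcardl
    · intro s hs s' hs' heq
      obtain ⟨hsA, hnd⟩ := Finset.mem_filter.mp (by exact hs)
      obtain ⟨hsA', hnd'⟩ := Finset.mem_filter.mp (by exact hs')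
      have hne : (s i ∩ s j).Nonempty :=
        Finset.not_disjoint_iff_nonempty_inter.mp hnd
      have hne' : (s' i ∩ s' j).Nonempty :=
        Finset.not_disjoint_iff_nonempty_inter.mp hnd'
      rw [hψ] at heq
      simp only [dif_pos hne, dif_pos hne'] at heq
      have hv1 : hne.choose = hne'.choose := (Prod.mk.injEq _ _ _ _).mp heq |>.1
      have hfun := (Prod.mk.injEq _ _ _ _).mp heq |>.2
      funext l
      have hl := congrFun hfun l
      by_cases hcase : l = i ∨ l = j
      · rw [if_pos hcase, if_pos hcase] at hl
        have hvl : hne.choose ∈ s l := by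
          rcases hcase with h | h <;> subst h
          · exact (Finset.mem_inter.mp hne.choose_spec).1
          · exact (Finset.mem_inter.mp hne.choose_spec).2
        have hvl' : hne'.choose ∈ s' l := by
          rcases hcase with h | h <;> subst h
          · exact (Finset.mem_inter.mp hne'.choose_spec).1
          · exact (Finset.mem_inter.mp hne'.choose_spec).2
        rw [← Finset.insert_erase hvl, ← Finset.insert_erase hvl', hl, hv1]
      · rw [if_neg hcase, if_neg hcase] at hl
        exact hl
  refine hcard.trans ?_
  rw [hT, Finset.card_product, Fintype.card_piFinset]
  clear hcard hψ hT
  clear ψ T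
  have hmsum : ∑ l, m l + 2 = k := by
    have h2 : ∑ l, (if l = i ∨ l = j then 1 else 0) = 2 := by
      rw [← Finset.sum_filter]
      have : Finset.univ.filter (fun l : Fin t => l = i ∨ l = j) = {i, j} := by
        ext l; simp
      rw [this, Finset.sum_const, Finset.card_pair hij]; simp
    have hk : ∑ l, m l + ∑ l, (if l = i ∨ l = j then 1 else 0) = k := by
      rw [← Finset.sum_add_distrib, ← hsum]
      refine Finset.sum_congr rfl fun l _ => ?_
      simp only [hm]
      have := hκ l
      split_ifs <;> omega
    omega
  calc Finset.univ.card * ∏ l, (Finset.powersetCard (m l)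
        (Finset.univ : Finset (Fin n))).card
      ≤ n * ∏ l, n ^ (m l) := by
        rw [Finset.card_univ, Fintype.card_fin]
        refine Nat.mul_le_mul_left n (Finset.prod_le_prod' ?_)
        intro l _
        rw [Finset.card_powersetCard, Finset.card_univ, Fintype.card_fin]
        exact Nat.choose_le_pow n (m l)
    _ = n ^ (1 + ∑ l, m l) := by
        rw [Finset.prod_pow_eq_pow_sum, pow_add, pow_one]
    _ ≤ n ^ (k - 1) := Nat.pow_le_pow_right hn (by omega)


/-- `PartiteExpand_p(π)` implies `Expand_p(π)`. -/
theorem partiteExpand_implies_expand (k : ℕ) (hk : 2 ≤ k)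
    (p : ℝ) (hp0 : 0 < p) (hp1 : p < 1)
    (π : List ℕ) (hπ : ProperPartition k π)
    (H : HSeq) (hH : UniformSeq k H) (h : PartiteExpand k p π H) :
    Expand k p π H := by
  classical
  obtain ⟨f, hfo, hfP⟩ := h
  obtain ⟨ht2, hposL, hsumL⟩ := hπ
  set t := π.length with htdef
  have ht : 0 < t := by omega
  have hsumFin : ∑ i : Fin t, π.get i = k := by
    rw [← hsumL]
    conv_rhs => rw [← List.ofFn_get π]
    rw [List.sum_ofFn]
  have hκpos : ∀ i : Fin t, 1 ≤ π.get i := fun i => hposL _ (List.get_mem π i)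
  have hf0 : ∀ N, 0 ≤ f N := by
    intro N
    have h0 := hfP N (fun _ => (∅ : Finset (Finset (Fin N)))) (by simp) (by simp)
    have he : eCount (H N) (fun _ : Fin t => (∅ : Finset (Finset (Fin N)))) = 0 := by
      unfold eCount
      rw [Finset.card_eq_zero, Finset.filter_eq_empty_iff]
      intro s hs
      have := Fintype.mem_piFinset.mp hs ⟨0, ht⟩
      simp at this
    rw [he] at h0
    have hprod : ∏ _i : Fin t, (((∅ : Finset (Finset (Fin N))).card : ℝ)) = 0 := by
      rw [Finset.card_empty]
      push_cast
      rw [Finset.prod_const, Finset.card_univ, Fintype.card_fin]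
      exact zero_pow ht.ne'
    rw [hprod] at h0
    simpa using h0
  refine ⟨fun N => (t:ℝ)^k * f N + (t:ℝ)^2 * (N:ℝ)^(k-1), ?_, ?_⟩
  · have h2 : (fun N : ℕ => ((N:ℝ))^(k-1)) =o[atTop] (fun N : ℕ => (N:ℝ)^k) :=
      (Asymptotics.isLittleO_pow_pow_atTop_of_lt (by omega : k - 1 < k)).comp_tendsto
        tendsto_natCast_atTop_atTop
    exact (hfo.const_mul_left _).add (h2.const_mul_left _)
  intro n S hS
  have hScard : ∀ s ∈ Fintype.piFinset S, ∀ i, (s i).card = π.get i :=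
    fun s hs i => hS i _ (Fintype.mem_piFinset.mp hs i)
  have hSsum : ∀ s ∈ Fintype.piFinset S, ∑ i, (s i).card = k := by
    intro s hs
    rw [Finset.sum_congr rfl fun i _ => hScard s hs i]
    exact hsumFin
  have hpi : ∀ c : Fin n → Fin t,
      Fintype.piFinset (fun i => (S i).filter (fun e => ∀ v ∈ e, c v = i))
        = (Fintype.piFinset S).filter (fun s => ∀ i, ∀ v ∈ s i, c v = i) := by
    intro c
    ext s
    simp only [Fintype.mem_piFinset, Finset.mem_filter]
    exact ⟨fun h => ⟨fun i => (h i).1, fun i => (h i).2⟩, fun h i => ⟨h.1 i, h.2 i⟩⟩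
  have hnk : n ≤ k + (n - k) := by omega
  set E := (Fintype.piFinset S).filter (fun s => Finset.univ.biUnion s ∈ H n) with hE
  set D := (Fintype.piFinset S).filter
    (fun s => ∀ i j, i ≠ j → Disjoint (s i) (s j)) with hD
  set ND := (Fintype.piFinset S).filter
    (fun s => ¬ ∀ i j, i ≠ j → Disjoint (s i) (s j)) with hND
  set N := t ^ (n - k) with hN
  -- Identity 1
  have hid1 : ∑ c : Fin n → Fin t,
      eCount (H n) (fun i => (S i).filter (fun e => ∀ v ∈ e, c v = i)) = E.card * N := by
    have step1 : ∀ c : Fin n → Fin t,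
        eCount (H n) (fun i => (S i).filter (fun e => ∀ v ∈ e, c v = i))
          = (E.filter (fun s => ∀ i, ∀ v ∈ s i, c v = i)).card := by
      intro c
      unfold eCount
      rw [hpi c, Finset.filter_comm]
    calc ∑ c : Fin n → Fin t,
          eCount (H n) (fun i => (S i).filter (fun e => ∀ v ∈ e, c v = i))
        = ∑ c : Fin n → Fin t, ∑ s ∈ E,
            (if ∀ i, ∀ v ∈ s i, c v = i then 1 else 0) := by
          refine Finset.sum_congr rfl fun c _ => ?_
          rw [step1, Finset.card_filter]
      _ = ∑ s ∈ E, ∑ c : Fin n → Fin t,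
            (if ∀ i, ∀ v ∈ s i, c v = i then 1 else 0) := Finset.sum_comm
      _ = ∑ _s ∈ E, N := by
          refine Finset.sum_congr rfl fun s hs => ?_
          rw [← Finset.card_filter]
          obtain ⟨hsA, hsE⟩ := Finset.mem_filter.mp hs
          have hdis : ∀ i j, i ≠ j → Disjoint (s i) (s j) := by
            apply disjoint_of_card_biUnion
            rw [hH n _ hsE]
            exact (hSsum s hsA).symm
          rw [count_colorings ht s hdis, hSsum s hsA]
      _ = E.card * N := by rw [Finset.sum_const, smul_eq_mul]
  -- Identity 2
  have hid2 : ∑ c : Fin n → Fin t,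
      ∏ i, ((S i).filter (fun e => ∀ v ∈ e, c v = i)).card = D.card * N := by
    have step1 : ∀ c : Fin n → Fin t,
        ∏ i, ((S i).filter (fun e => ∀ v ∈ e, c v = i)).card
          = ((Fintype.piFinset S).filter (fun s => ∀ i, ∀ v ∈ s i, c v = i)).card := by
      intro c
      rw [← Fintype.card_piFinset, hpi c]
    calc ∑ c : Fin n → Fin t, ∏ i, ((S i).filter (fun e => ∀ v ∈ e, c v = i)).card
        = ∑ c : Fin n → Fin t, ∑ s ∈ Fintype.piFinset S,
            (if ∀ i, ∀ v ∈ s i, c v = i then 1 else 0) := by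
          refine Finset.sum_congr rfl fun c _ => ?_
          rw [step1, Finset.card_filter]
      _ = ∑ s ∈ Fintype.piFinset S, ∑ c : Fin n → Fin t,
            (if ∀ i, ∀ v ∈ s i, c v = i then 1 else 0) := Finset.sum_comm
      _ = ∑ s ∈ Fintype.piFinset S,
            (if ∀ i j, i ≠ j → Disjoint (s i) (s j) then N else 0) := by
          refine Finset.sum_congr rfl fun s hs => ?_
          rw [← Finset.card_filter]
          by_cases hdis : ∀ i j, i ≠ j → Disjoint (s i) (s j)
          · rw [if_pos hdis, count_colorings ht s hdis, hSsum s hs]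
          · rw [if_neg hdis]
            push_neg at hdis
            obtain ⟨i, j, hij, hnd⟩ := hdis
            obtain ⟨v, hv⟩ := Finset.not_disjoint_iff_nonempty_inter.mp hnd
            rw [count_colorings_zero s i j hij v (Finset.mem_inter.mp hv).1
              (Finset.mem_inter.mp hv).2, Finset.card_empty]
      _ = ∑ _s ∈ D, N := (Finset.sum_filter _ _).symm
      _ = D.card * N := by rw [Finset.sum_const, smul_eq_mul]
  -- cardinality split
  have hsplit : D.card + ND.card = (Fintype.piFinset S).card :=
    Finset.card_filter_add_card_filter_not _
  -- bound on non-disjoint tuples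
  have hNDle : ND.card ≤ t^2 * n^(k-1) := by
    have hsub : ND ⊆ (Finset.univ : Finset (Fin t)).offDiag.biUnion
        (fun q => (Fintype.piFinset S).filter (fun s => ¬ Disjoint (s q.1) (s q.2))) := by
      intro s hs
      obtain ⟨hsA, hnd⟩ := Finset.mem_filter.mp hs
      push_neg at hnd
      obtain ⟨i, j, hij, hnd⟩ := hnd
      exact Finset.mem_biUnion.mpr ⟨(i, j),
        Finset.mem_offDiag.mpr ⟨Finset.mem_univ _, Finset.mem_univ _, hij⟩,
        Finset.mem_filter.mpr ⟨hsA, hnd⟩⟩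
    calc ND.card ≤ ∑ q ∈ (Finset.univ : Finset (Fin t)).offDiag,
          ((Fintype.piFinset S).filter (fun s => ¬ Disjoint (s q.1) (s q.2))).card :=
        (Finset.card_le_card hsub).trans Finset.card_biUnion_le
      _ ≤ ∑ _q ∈ (Finset.univ : Finset (Fin t)).offDiag, n^(k-1) := by
          refine Finset.sum_le_sum fun q hq => ?_
          exact pair_bound (fun i => π.get i) hκpos hsumFin S hS q.1 q.2
            (Finset.mem_offDiag.mp hq).2.2
      _ = (Finset.univ : Finset (Fin t)).offDiag.card * n^(k-1) := by
          rw [Finset.sum_const, smul_eq_mul]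
      _ ≤ t^2 * n^(k-1) := by
          refine Nat.mul_le_mul_right _ ?_
          rw [Finset.offDiag_card, Finset.card_univ, Fintype.card_fin]
          calc t * t - t ≤ t * t := Nat.sub_le _ _
            _ = t^2 := (sq t).symm
  -- the key estimate: |E.card - p * D.card| ≤ t^k * f n
  have hNpos : (0:ℝ) < (N:ℕ) := by
    rw [hN]
    exact_mod_cast Nat.pow_pos ht
  have key : |(E.card:ℝ) - p * D.card| ≤ (t:ℝ)^k * f n := by
    have hsum1 : ∑ c : Fin n → Fin t,
        (eCount (H n) (fun i => (S i).filter (fun e => ∀ v ∈ e, c v = i)) : ℝ)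
          = (E.card : ℝ) * N := by
      rw [← Nat.cast_sum, hid1]
      push_cast
      ring
    have hsum2 : ∑ c : Fin n → Fin t,
        (p * ∏ i, (((S i).filter (fun e => ∀ v ∈ e, c v = i)).card : ℝ))
          = p * ((D.card : ℝ) * N) := by
      rw [← Finset.mul_sum]
      congr 1
      have : ∀ c : Fin n → Fin t, ∏ i, (((S i).filter (fun e => ∀ v ∈ e, c v = i)).card : ℝ)
          = ((∏ i, ((S i).filter (fun e => ∀ v ∈ e, c v = i)).card : ℕ) : ℝ) := by
        intro c; push_cast; ring
      rw [Finset.sum_congr rfl fun c _ => this c, ← Nat.cast_sum, hid2]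
      push_cast
      ring
    have habs : |(E.card : ℝ) * N - p * ((D.card:ℝ) * N)| ≤ (t:ℝ)^n * f n := by
      rw [← hsum1, ← hsum2, ← Finset.sum_sub_distrib]
      calc |∑ c : Fin n → Fin t,
            ((eCount (H n) (fun i => (S i).filter (fun e => ∀ v ∈ e, c v = i)) : ℝ)
              - p * ∏ i, (((S i).filter (fun e => ∀ v ∈ e, c v = i)).card : ℝ))|
          ≤ ∑ c : Fin n → Fin t,
            |(eCount (H n) (fun i => (S i).filter (fun e => ∀ v ∈ e, c v = i)) : ℝ)
              - p * ∏ i, (((S i).filter (fun e => ∀ v ∈ e, c v = i)).card : ℝ)| :=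
            Finset.abs_sum_le_sum_abs _ _
        _ ≤ ∑ _c : Fin n → Fin t, f n := by
            refine Finset.sum_le_sum fun c _ => ?_
            apply hfP n (fun i => (S i).filter (fun e => ∀ v ∈ e, c v = i))
            · intro i s' hs'
              exact hS i s' (Finset.mem_filter.mp hs').1
            · intro i j hij
              rw [Finset.disjoint_left]
              intro v hv hv'
              obtain ⟨e, he, hve⟩ := Finset.mem_biUnion.mp hv
              obtain ⟨e', he', hve'⟩ := Finset.mem_biUnion.mp hv'
              have h1 : c v = i := (Finset.mem_filter.mp he).2 v hve
              have h2 : c v = j := (Finset.mem_filter.mp he').2 v hve'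
              exact hij (h1 ▸ h2)
        _ = (t:ℝ)^n * f n := by
            rw [Finset.sum_const, Finset.card_univ, Fintype.card_fun, Fintype.card_fin,
              Fintype.card_fin, nsmul_eq_mul]
            push_cast
            ring
    have htn : ((t:ℝ))^n ≤ (t:ℝ)^k * N := by
      have hnat : t^n ≤ t^k * N := by
        rw [hN, ← pow_add]
        exact Nat.pow_le_pow_right ht hnk
      exact_mod_cast hnat
    have hmul : |(E.card:ℝ) - p * D.card| * N ≤ ((t:ℝ)^k * f n) * N := by
      calc |(E.card:ℝ) - p * D.card| * N
          = |((E.card:ℝ) - p * D.card) * N| := by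
            rw [abs_mul, abs_of_nonneg (le_of_lt hNpos)]
        _ = |(E.card : ℝ) * N - p * ((D.card:ℝ) * N)| := by ring_nf
        _ ≤ (t:ℝ)^n * f n := habs
        _ ≤ ((t:ℝ)^k * N) * f n := mul_le_mul_of_nonneg_right htn (hf0 n)
        _ = ((t:ℝ)^k * f n) * N := by ring
    exact le_of_mul_le_mul_right hmul hNpos
  -- final assembly
  have hEeq : (eCount (H n) S : ℝ) = (E.card : ℝ) := rfl
  have hAprod : ∏ i : Fin t, ((S i).card : ℝ) = ((Fintype.piFinset S).card : ℝ) := by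
    rw [Fintype.card_piFinset]
    push_cast
    ring
  rw [hEeq, hAprod]
  have hsplitR : ((Fintype.piFinset S).card : ℝ) = (D.card : ℝ) + ND.card := by
    exact_mod_cast hsplit.symm
  rw [hsplitR]
  have hNDreal : (ND.card : ℝ) ≤ (t:ℝ)^2 * (n:ℝ)^(k-1) := by
    exact_mod_cast hNDle
  calc |(E.card:ℝ) - p * ((D.card:ℝ) + ND.card)|
      = |((E.card:ℝ) - p * D.card) + (-(p * ND.card))| := by ring_nf
    _ ≤ |(E.card:ℝ) - p * D.card| + |(-(p * ND.card))| := abs_add_le _ _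
    _ ≤ (t:ℝ)^k * f n + p * ND.card := by
        refine add_le_add key ?_
        rw [abs_neg, abs_of_nonneg (by positivity)]
    _ ≤ (t:ℝ)^k * f n + (t:ℝ)^2 * (n:ℝ)^(k-1) := by
        refine add_le_add_right ?_ _
        calc p * ND.card ≤ 1 * ND.card :=
            mul_le_mul_of_nonneg_right (le_of_lt hp1) (Nat.cast_nonneg _)
          _ = ND.card := one_mul _
          _ ≤ (t:ℝ)^2 * (n:ℝ)^(k-1) := hNDreal
end

section
/- Let k ≥ 2, let 0 < p < 1, and let π and π' be proper partitions of k such that π' is a refinement of π. Then every hypergraph sequence satisfying Expand_p(π) also satisfies Expand_p(π'). -/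
open Filter Finset Asymptotics

lemma aux_prod_le_prod_add {ι : Type*} [DecidableEq ι] (s : Finset ι) (A B : ι → ℕ)
    (h : ∀ i ∈ s, B i ≤ A i) :
    ∏ i ∈ s, A i ≤ ∏ i ∈ s, B i + ∑ i ∈ s, (A i - B i) * ∏ i' ∈ s.erase i, A i' := by
  classical
  induction s using Finset.induction_on with
  | empty => simp
  | @insert a s ha ih =>
    have hB : ∀ i ∈ s, B i ≤ A i := fun i hi => h i (mem_insert_of_mem hi)
    have iha := ih hB
    have hBa : B a ≤ A a := h a (mem_insert_self a s)
    have hprodBA : ∏ i ∈ s, B i ≤ ∏ i ∈ s, A i :=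
      Finset.prod_le_prod' hB
    rw [prod_insert ha, prod_insert ha, sum_insert ha, erase_insert ha]
    have hsum : ∑ i ∈ s, (A i - B i) * ∏ i' ∈ (insert a s).erase i, A i'
        = A a * ∑ i ∈ s, (A i - B i) * ∏ i' ∈ s.erase i, A i' := by
      rw [Finset.mul_sum]
      refine Finset.sum_congr rfl fun i hi => ?_
      have hia : i ≠ a := by rintro rfl; exact ha hi
      rw [Finset.erase_insert_of_ne hia.symm, Finset.prod_insert (fun hmem => ha (Finset.mem_of_mem_erase hmem))]
      ring
    rw [hsum]
    calc A a * ∏ i ∈ s, A i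
        ≤ A a * (∏ i ∈ s, B i + ∑ i ∈ s, (A i - B i) * ∏ i' ∈ s.erase i, A i') :=
          Nat.mul_le_mul_left _ iha
      _ = A a * ∏ i ∈ s, B i + A a * ∑ i ∈ s, (A i - B i) * ∏ i' ∈ s.erase i, A i' := by ring
      _ ≤ (B a * ∏ i ∈ s, B i + (A a - B a) * ∏ i' ∈ s, A i')
          + A a * ∑ i ∈ s, (A i - B i) * ∏ i' ∈ s.erase i, A i' := by
          have : A a * ∏ i ∈ s, B i = B a * ∏ i ∈ s, B i + (A a - B a) * ∏ i ∈ s, B i := by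
            rw [← Nat.add_mul]; congr 1; omega
          rw [this]
          have h2 : (A a - B a) * ∏ i ∈ s, B i ≤ (A a - B a) * ∏ i' ∈ s, A i' :=
            Nat.mul_le_mul_left _ hprodBA
          omega
      _ = B a * ∏ i ∈ s, B i
          + ((A a - B a) * ∏ i' ∈ s, A i' + A a * ∑ i ∈ s, (A i - B i) * ∏ i' ∈ s.erase i, A i') := by
          ring

lemma aux_card_small_subsets (n K : ℕ) (hn : 1 ≤ n) :
    ((Finset.univ : Finset (Finset (Fin n))).filter (fun u => u.card < K)).card
      ≤ K * n ^ (K - 1) := by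
  classical
  have hsub : (Finset.univ : Finset (Finset (Fin n))).filter (fun u => u.card < K)
      ⊆ (Finset.range K).biUnion (fun c => Finset.univ.filter (fun u : Finset (Fin n) => u.card = c)) := by
    intro u hu
    simp only [mem_filter, mem_univ, true_and] at hu
    simp only [mem_biUnion, mem_range, mem_filter, mem_univ, true_and]
    exact ⟨u.card, hu, rfl⟩
  calc ((Finset.univ : Finset (Finset (Fin n))).filter (fun u => u.card < K)).card
      ≤ ((Finset.range K).biUnion (fun c => Finset.univ.filter (fun u : Finset (Fin n) => u.card = c))).card :=
        Finset.card_le_card hsub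
    _ ≤ ∑ c ∈ Finset.range K, (Finset.univ.filter (fun u : Finset (Fin n) => u.card = c)).card :=
        Finset.card_biUnion_le
    _ ≤ ∑ _c ∈ Finset.range K, n ^ (K - 1) := by
        refine Finset.sum_le_sum fun c hc => ?_
        have he : Finset.univ.filter (fun u : Finset (Fin n) => u.card = c)
            = Finset.powersetCard c Finset.univ := by
          ext u; simp [Finset.mem_powersetCard]
        rw [he, Finset.card_powersetCard, Finset.card_univ, Fintype.card_fin]
        calc n.choose c ≤ n ^ c := Nat.choose_le_pow n c
          _ ≤ n ^ (K - 1) := Nat.pow_le_pow_right hn (by simp at hc; omega)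
    _ = K * n ^ (K - 1) := by simp [Finset.sum_const, mul_comm]

lemma aux_n1 (a b s x : ℕ) (h1 : b + s = a) (h2 : s ≤ x) : a - b ≤ x := by omega
lemma aux_n2 (g se k : ℕ) (h : g + se = k) : se = k - g := by omega
lemma aux_n3 (a b : ℕ) (h1 : 0 < a) (h2 : a ≤ b) : a - 1 + (b - a) = b - 1 := by omega

lemma key {n k : ℕ} (p : ℝ) (hp0 : 0 ≤ p)
    (π π' : List ℕ) (hπpos : ∀ m ∈ π, 0 < m)
    (hπsum : π.sum = k)
    (φ : Fin π'.length → Fin π.length)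
    (hφ : ∀ i, π.get i = ∑ j ∈ Finset.univ.filter (fun j => φ j = i), π'.get j)
    (H : Finset (Finset (Fin n))) (hH : ∀ e ∈ H, e.card = k)
    (F : ℝ)
    (hbound : ∀ S : Fin π.length → Finset (Finset (Fin n)),
      (∀ i, ∀ s ∈ S i, s.card = π.get i) →
      |(eCount H S : ℝ) - p * ∏ i, ((S i).card : ℝ)| ≤ F)
    (S' : Fin π'.length → Finset (Finset (Fin n)))
    (hS' : ∀ j, ∀ s ∈ S' j, s.card = π'.get j)
    (hn : 1 ≤ n) :
    |(eCount H S' : ℝ) - p * ∏ j, ((S' j).card : ℝ)| ≤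
      ((2 ^ (k * π'.length)) ^ π.length : ℕ) * F +
      p * ((2 ^ (k * π'.length) * (k * n ^ (k - 1)) : ℕ) : ℝ) := by
  classical
  set C : ℕ := 2 ^ (k * π'.length) with hC
  -- the multiplicity function
  set N : Fin π.length → Finset (Fin n) → ℕ := fun i u =>
    ((Fintype.piFinset (fun j : {j : Fin π'.length // φ j = i} => S' j.1)).filter
      (fun s => Finset.univ.biUnion (fun j => s j) = u)).card with hNdef
  set T : Fin π.length → ℕ → Finset (Finset (Fin n)) := fun i c =>
    Finset.univ.filter (fun u => u.card = π.get i ∧ c < N i u) with hTdef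
  set Φ : (Fin π'.length → Finset (Fin n)) → (Fin π.length → Finset (Fin n)) := fun s i =>
    Finset.univ.biUnion (fun j : {j : Fin π'.length // φ j = i} => s j.1) with hΦdef
  -- sum of parts of π over Fin
  have hsum_fin : ∑ i, π.get i = k := by
    rw [← Fin.sum_ofFn, List.ofFn_get, hπsum]
  have hget_le : ∀ i, π.get i ≤ k := by
    intro i
    rw [← hsum_fin]
    exact Finset.single_le_sum (fun _ _ => Nat.zero_le _) (mem_univ i)
  have hget_pos : ∀ i, 0 < π.get i := fun i => hπpos _ (π.get_mem i)
  -- (u1) unions agree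
  have hu1 : ∀ s : Fin π'.length → Finset (Fin n),
      Finset.univ.biUnion (Φ s) = Finset.univ.biUnion s := by
    intro s; ext a
    simp only [hΦdef, Finset.mem_biUnion, Finset.mem_univ, true_and, Subtype.exists]
    constructor
    · rintro ⟨i, j, hj, ha⟩; exact ⟨j, ha⟩
    · rintro ⟨j, ha⟩; exact ⟨φ j, j, rfl, ha⟩
  -- (fc) fiber cardinality factorizes
  have hfc : ∀ u : Fin π.length → Finset (Fin n),
      ((Fintype.piFinset S').filter (fun s => Φ s = u)).card = ∏ i, N i (u i) := by
    intro u
    have : ∏ i, N i (u i) =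
        (Fintype.piFinset (fun i => ((Fintype.piFinset (fun j : {j : Fin π'.length // φ j = i} => S' j.1)).filter
          (fun s => Finset.univ.biUnion (fun j => s j) = u i)))).card :=
      (Fintype.card_piFinset _).symm
    rw [this]
    have hv : ∀ (v : (i : Fin π.length) → {j : Fin π'.length // φ j = i} → Finset (Fin n))
        (j : Fin π'.length) (i : Fin π.length) (h : φ j = i),
        v (φ j) ⟨j, rfl⟩ = v i ⟨j, h⟩ := by
      intro v j i h; subst h; rfl
    refine Finset.card_bij' (fun s _ => fun i (j : {j : Fin π'.length // φ j = i}) => s j.1)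
      (fun v _ => fun j => v (φ j) ⟨j, rfl⟩) ?_ ?_ ?_ ?_
    · intro s hs
      simp only [Finset.mem_filter, Fintype.mem_piFinset] at hs ⊢
      intro i
      refine ⟨fun j => hs.1 j.1, ?_⟩
      exact congrFun hs.2 i
    · intro v hv2
      simp only [Finset.mem_filter, Fintype.mem_piFinset] at hv2 ⊢
      constructor
      · intro j
        exact ((hv2 (φ j)).1 ⟨j, rfl⟩ : _)
      · funext i
        have : Φ (fun j => v (φ j) ⟨j, rfl⟩) i
            = Finset.univ.biUnion (fun j : {j : Fin π'.length // φ j = i} => v i j) := by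
          simp only [hΦdef]
          refine Finset.biUnion_congr rfl ?_
          intro j _
          rw [hv v j.1 i j.2]
        rw [this]
        exact (hv2 i).2
    · intro s hs; rfl
    · intro v hv2
      funext i j
      exact hv v j.1 i j.2
  -- (Npos) positivity of N forces the right cardinality
  have hNpos : ∀ i u, 0 < N i u → u.card ≤ π.get i := by
    intro i u hN
    rw [hNdef, Finset.card_pos] at hN
    obtain ⟨s, hs⟩ := hN
    simp only [Finset.mem_filter, Fintype.mem_piFinset] at hs
    rw [← hs.2]
    calc (Finset.univ.biUnion fun j : {j : Fin π'.length // φ j = i} => s j).card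
        ≤ ∑ j : {j : Fin π'.length // φ j = i}, (s j).card := Finset.card_biUnion_le
      _ = ∑ j : {j : Fin π'.length // φ j = i}, π'.get j.1 := by
          refine Finset.sum_congr rfl fun j _ => hS' j.1 _ (hs.1 j)
      _ = π.get i := by
          rw [hφ i]
          exact (Finset.sum_subtype _ (by simp) _).symm
  -- (NC) global bound on multiplicities
  have hNC : ∀ i u, u.card ≤ k → N i u ≤ C := by
    intro i u hu
    have hsub : ((Fintype.piFinset (fun j : {j : Fin π'.length // φ j = i} => S' j.1)).filter
        (fun s => Finset.univ.biUnion (fun j => s j) = u))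
        ⊆ Fintype.piFinset (fun _ : {j : Fin π'.length // φ j = i} => u.powerset) := by
      intro s hs
      simp only [Finset.mem_filter, Fintype.mem_piFinset] at hs ⊢
      intro j
      rw [Finset.mem_powerset, ← hs.2]
      exact Finset.subset_biUnion_of_mem _ (mem_univ j)
    calc N i u ≤ (Fintype.piFinset (fun _ : {j : Fin π'.length // φ j = i} => u.powerset)).card :=
          Finset.card_le_card hsub
      _ = ∏ _j : {j : Fin π'.length // φ j = i}, u.powerset.card := Fintype.card_piFinset _
      _ = (2 ^ u.card) ^ Fintype.card {j : Fin π'.length // φ j = i} := by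
          rw [Finset.prod_const, Finset.card_univ, Finset.card_powerset]
      _ ≤ (2 ^ k) ^ π'.length := by
          refine Nat.pow_le_pow_left (Nat.pow_le_pow_right (by norm_num) hu) _ |>.trans ?_
          exact Nat.pow_le_pow_right (Nat.one_le_two_pow) ((Fintype.card_subtype_le _).trans_eq (Fintype.card_fin _))
      _ = C := by rw [hC, pow_mul]
  -- (cnt) the level-set count
  have hcnt : ∀ i (u : Finset (Fin n)),
      ((Finset.range C).filter (fun c => u ∈ T i c)).card
        = if u.card = π.get i then N i u else 0 := by
    intro i u
    by_cases hc : u.card = π.get i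
    · rw [if_pos hc]
      have hNCu : N i u ≤ C := hNC i u (hc ▸ hget_le i)
      have : (Finset.range C).filter (fun c => u ∈ T i c) = Finset.range (N i u) := by
        ext c
        simp only [Finset.mem_filter, Finset.mem_range, hTdef, mem_univ,
          true_and, hc]
        omega
      rw [this, Finset.card_range]
    · rw [if_neg hc]
      rw [Finset.card_eq_zero, Finset.filter_eq_empty_iff]
      intro c _
      simp only [hTdef, Finset.mem_filter, mem_univ, true_and]
      rintro ⟨h1, -⟩
      exact hc h1
  -- eCount of the T-system, as a full sum
  have hec : ∀ c : Fin π.length → ℕ,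
      (eCount H (fun i => T i (c i)) : ℕ)
        = ∑ u : Fin π.length → Finset (Fin n),
            (∏ i, if u i ∈ T i (c i) then 1 else 0) *
              (if Finset.univ.biUnion u ∈ H then 1 else 0) := by
    intro c
    unfold eCount
    rw [Finset.card_filter]
    have hpi : Fintype.piFinset (fun i => T i (c i))
        = Finset.univ.filter (fun u : Fin π.length → Finset (Fin n) => ∀ i, u i ∈ T i (c i)) := by
      ext u; simp [Fintype.mem_piFinset]
    rw [hpi, Finset.sum_filter]
    refine Finset.sum_congr rfl fun u _ => ?_
    rw [Finset.prod_boole]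
    simp only [Finset.mem_univ, forall_const]
    by_cases h1 : ∀ i, u i ∈ T i (c i) <;> by_cases h2 : Finset.univ.biUnion u ∈ H <;>
      simp [h1, h2]
  -- main identity
  have hI : (eCount H S' : ℕ)
      = ∑ c ∈ Fintype.piFinset (fun _ : Fin π.length => Finset.range C),
          eCount H (fun i => T i (c i)) := by
    have ha : (eCount H S' : ℕ) = ∑ u : Fin π.length → Finset (Fin n),
        (if Finset.univ.biUnion u ∈ H then ∏ i, N i (u i) else 0) := by
      unfold eCount
      rw [Finset.card_eq_sum_card_fiberwise (f := Φ) (t := Finset.univ)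
        (fun x _ => Finset.mem_univ _)]
      refine Finset.sum_congr rfl fun u _ => ?_
      rw [Finset.filter_filter]
      have hcong : (Fintype.piFinset S').filter
            (fun s => Finset.univ.biUnion s ∈ H ∧ Φ s = u)
          = (Fintype.piFinset S').filter
            (fun s => Finset.univ.biUnion u ∈ H ∧ Φ s = u) := by
        refine Finset.filter_congr fun s _ => ?_
        constructor
        · rintro ⟨h1, h2⟩
          refine ⟨?_, h2⟩
          rw [← h2, hu1 s]
          exact h1
        · rintro ⟨h1, h2⟩
          refine ⟨?_, h2⟩
          rw [← h2, hu1 s] at h1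
          exact h1
      rw [hcong]
      by_cases hu : Finset.univ.biUnion u ∈ H
      · rw [if_pos hu, ← hfc u]
        congr 1
        refine Finset.filter_congr fun s _ => ?_
        simp [hu]
      · rw [if_neg hu]
        simp [hu]
    -- per-u replacement of N by level-set counts
    have hb : ∀ u : Fin π.length → Finset (Fin n),
        (if Finset.univ.biUnion u ∈ H then ∏ i, N i (u i) else 0)
          = (if Finset.univ.biUnion u ∈ H then
              ∏ i, ((Finset.range C).filter (fun c => u i ∈ T i c)).card else 0) := by
      intro u
      by_cases hu : Finset.univ.biUnion u ∈ H
      · rw [if_pos hu, if_pos hu]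
        by_cases h1 : ∀ i, (u i).card = π.get i
        · refine Finset.prod_congr rfl fun i _ => ?_
          rw [hcnt i (u i), if_pos (h1 i)]
        · push_neg at h1
          obtain ⟨i0, hi0⟩ := h1
          have hrhs : ∏ i, ((Finset.range C).filter (fun c => u i ∈ T i c)).card = 0 := by
            refine Finset.prod_eq_zero (Finset.mem_univ i0) ?_
            rw [hcnt i0 (u i0), if_neg hi0]
          rw [hrhs]
          by_contra hlhs
          have hall : ∀ i, 0 < N i (u i) := by
            intro i
            rcases Nat.eq_zero_or_pos (N i (u i)) with h | h
            · exact absurd (Finset.prod_eq_zero (Finset.mem_univ i) h) hlhs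
            · exact h
          have hcards : ∀ i, (u i).card ≤ π.get i := fun i => hNpos i (u i) (hall i)
          have hcardU : (Finset.univ.biUnion u).card = k := hH _ hu
          have hle : k ≤ ∑ i, (u i).card := by
            rw [← hcardU]; exact Finset.card_biUnion_le
          have hlt : ∑ i, (u i).card < ∑ i, π.get i :=
            Finset.sum_lt_sum (fun i _ => hcards i)
              ⟨i0, Finset.mem_univ i0, lt_of_le_of_ne (hcards i0) hi0⟩
          rw [hsum_fin] at hlt
          exact absurd hlt (not_lt.2 hle)
      · rw [if_neg hu, if_neg hu]
    calc (eCount H S' : ℕ)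
        = ∑ u : Fin π.length → Finset (Fin n),
            (if Finset.univ.biUnion u ∈ H then
              ∏ i, ((Finset.range C).filter (fun c => u i ∈ T i c)).card else 0) := by
          rw [ha]; exact Finset.sum_congr rfl fun u _ => hb u
      _ = ∑ u : Fin π.length → Finset (Fin n),
            (∏ i, ((Finset.range C).filter (fun c => u i ∈ T i c)).card) *
              (if Finset.univ.biUnion u ∈ H then 1 else 0) := by
          refine Finset.sum_congr rfl fun u _ => ?_
          by_cases hu : Finset.univ.biUnion u ∈ H <;> simp [hu]
      _ = ∑ u : Fin π.length → Finset (Fin n),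
            (∑ c ∈ Fintype.piFinset (fun _ : Fin π.length => Finset.range C),
              ∏ i, if u i ∈ T i (c i) then 1 else 0) *
              (if Finset.univ.biUnion u ∈ H then 1 else 0) := by
          refine Finset.sum_congr rfl fun u _ => ?_
          congr 1
          calc ∏ i, ((Finset.range C).filter (fun c => u i ∈ T i c)).card
              = ∏ i, ∑ c ∈ Finset.range C, (if u i ∈ T i c then 1 else 0) :=
                Finset.prod_congr rfl fun i _ => Finset.card_filter _ _
            _ = _ := Finset.prod_univ_sum _ _
      _ = ∑ u : Fin π.length → Finset (Fin n),
            ∑ c ∈ Fintype.piFinset (fun _ : Fin π.length => Finset.range C),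
              (∏ i, if u i ∈ T i (c i) then 1 else 0) *
                (if Finset.univ.biUnion u ∈ H then 1 else 0) := by
          refine Finset.sum_congr rfl fun u _ => ?_
          rw [Finset.sum_mul]
      _ = ∑ c ∈ Fintype.piFinset (fun _ : Fin π.length => Finset.range C),
            ∑ u : Fin π.length → Finset (Fin n),
              (∏ i, if u i ∈ T i (c i) then 1 else 0) *
                (if Finset.univ.biUnion u ∈ H then 1 else 0) := Finset.sum_comm
      _ = ∑ c ∈ Fintype.piFinset (fun _ : Fin π.length => Finset.range C),
            eCount H (fun i => T i (c i)) := by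
          refine Finset.sum_congr rfl fun c _ => (hec c).symm
  -- the fiber products and level-set sums
  set A : Fin π.length → ℕ := fun i => ∏ j : {j : Fin π'.length // φ j = i}, (S' j.1).card with hAdef
  set B : Fin π.length → ℕ := fun i => ∑ c ∈ Finset.range C, (T i c).card with hBdef
  have hAB1 : ∏ j, (S' j).card = ∏ i, A i :=
    (Fintype.prod_fiberwise φ fun j => (S' j).card).symm
  have hAsum : ∀ i, A i = ∑ u : Finset (Fin n), N i u := by
    intro i
    have h1 : A i = (Fintype.piFinset (fun j : {j : Fin π'.length // φ j = i} => S' j.1)).card :=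
      (Fintype.card_piFinset _).symm
    rw [h1, Finset.card_eq_sum_card_fiberwise
      (f := fun s => Finset.univ.biUnion (fun j => s j)) (t := Finset.univ)
      (fun x _ => Finset.mem_univ _)]
  have hBsum : ∀ i, B i = ∑ u ∈ Finset.univ.filter (fun u : Finset (Fin n) => u.card = π.get i), N i u := by
    intro i
    calc B i = ∑ c ∈ Finset.range C, ∑ u : Finset (Fin n), (if u ∈ T i c then 1 else 0) := by
          refine Finset.sum_congr rfl fun c _ => ?_
          rw [← Finset.card_filter, Finset.filter_univ_mem]
      _ = ∑ u : Finset (Fin n), ∑ c ∈ Finset.range C, (if u ∈ T i c then 1 else 0) :=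
          Finset.sum_comm
      _ = ∑ u : Finset (Fin n), (if u.card = π.get i then N i u else 0) := by
          refine Finset.sum_congr rfl fun u _ => ?_
          rw [← Finset.card_filter, hcnt i u]
      _ = _ := (Finset.sum_filter _ _).symm
  have hBA : ∀ i, B i ≤ A i := by
    intro i
    rw [hAsum i, hBsum i]
    exact Finset.sum_le_sum_of_subset (Finset.filter_subset _ _)
  have hdiff : ∀ i, A i - B i ≤ C * (π.get i * n ^ (π.get i - 1)) := by
    intro i
    have hsplit : B i + ∑ u ∈ Finset.univ.filter (fun u : Finset (Fin n) => ¬ u.card = π.get i), N i u = A i := by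
      rw [hAsum i, hBsum i]
      exact Finset.sum_filter_add_sum_filter_not _ _ _
    have hbound2 : ∑ u ∈ Finset.univ.filter (fun u : Finset (Fin n) => ¬ u.card = π.get i), N i u
        ≤ C * (π.get i * n ^ (π.get i - 1)) := by
      calc ∑ u ∈ Finset.univ.filter (fun u : Finset (Fin n) => ¬ u.card = π.get i), N i u
          ≤ ∑ u ∈ Finset.univ.filter (fun u : Finset (Fin n) => ¬ u.card = π.get i),
              (if u.card < π.get i then C else 0) := by
            refine Finset.sum_le_sum fun u hu => ?_
            have hne : ¬ u.card = π.get i := (Finset.mem_filter.1 hu).2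
            by_cases hlt : u.card < π.get i
            · rw [if_pos hlt]
              exact hNC i u (le_of_lt (lt_of_lt_of_le hlt (hget_le i)))
            · rw [if_neg hlt]
              rcases Nat.eq_zero_or_pos (N i u) with hz | hz
              · exact le_of_eq hz
              · exact absurd (lt_of_le_of_ne (hNpos i u hz) hne) hlt
        _ ≤ ∑ u : Finset (Fin n), (if u.card < π.get i then C else 0) :=
            Finset.sum_le_sum_of_subset (Finset.filter_subset _ _)
        _ = C * ((Finset.univ : Finset (Finset (Fin n))).filter (fun u => u.card < π.get i)).card := by
            rw [← Finset.sum_filter, Finset.sum_const, smul_eq_mul, mul_comm]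
        _ ≤ C * (π.get i * n ^ (π.get i - 1)) :=
            Nat.mul_le_mul_left _ (aux_card_small_subsets n (π.get i) hn)
    exact aux_n1 _ _ _ _ hsplit hbound2
  have hAle : ∀ i, A i ≤ n ^ π.get i := by
    intro i
    have h1 : ∀ j : {j : Fin π'.length // φ j = i}, (S' j.1).card ≤ n ^ π'.get j.1 := by
      intro j
      have hsub : S' j.1 ⊆ Finset.powersetCard (π'.get j.1) Finset.univ := by
        intro s hs
        rw [Finset.mem_powersetCard]
        exact ⟨Finset.subset_univ s, hS' j.1 s hs⟩
      calc (S' j.1).card ≤ (Finset.powersetCard (π'.get j.1) (Finset.univ : Finset (Fin n))).card :=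
            Finset.card_le_card hsub
        _ = n.choose (π'.get j.1) := by
            rw [Finset.card_powersetCard, Finset.card_univ, Fintype.card_fin]
        _ ≤ n ^ π'.get j.1 := Nat.choose_le_pow _ _
    calc A i ≤ ∏ j : {j : Fin π'.length // φ j = i}, n ^ π'.get j.1 :=
          Finset.prod_le_prod' (fun j _ => h1 j)
      _ = n ^ ∑ j : {j : Fin π'.length // φ j = i}, π'.get j.1 :=
          Finset.prod_pow_eq_pow_sum _ _ _
      _ = n ^ π.get i := by
          rw [hφ i]
          congr 1
          exact (Finset.sum_subtype _ (by simp) _).symm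
  have hprod : ∏ i, A i ≤ ∏ i, B i + C * (k * n ^ (k - 1)) := by
    have h0 := aux_prod_le_prod_add Finset.univ A B (fun i _ => hBA i)
    have h2 : ∑ i, (A i - B i) * ∏ i' ∈ Finset.univ.erase i, A i' ≤ C * (k * n ^ (k - 1)) := by
      calc ∑ i, (A i - B i) * ∏ i' ∈ Finset.univ.erase i, A i'
          ≤ ∑ i, (C * (π.get i * n ^ (π.get i - 1))) * n ^ (k - π.get i) := by
            refine Finset.sum_le_sum fun i _ => Nat.mul_le_mul (hdiff i) ?_
            calc ∏ i' ∈ Finset.univ.erase i, A i'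
                ≤ ∏ i' ∈ Finset.univ.erase i, n ^ π.get i' :=
                  Finset.prod_le_prod' fun i' _ => hAle i'
              _ = n ^ ∑ i' ∈ Finset.univ.erase i, π.get i' :=
                  Finset.prod_pow_eq_pow_sum _ _ _
              _ = n ^ (k - π.get i) := by
                  congr 1
                  have h3 := Finset.add_sum_erase Finset.univ (fun i => π.get i) (Finset.mem_univ i)
                  rw [hsum_fin] at h3
                  exact aux_n2 _ _ _ h3
        _ = ∑ i : Fin π.length, (C * n ^ (k - 1)) * π.get i := by
            refine Finset.sum_congr rfl fun i _ => ?_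
            have h3 : n ^ (π.get i - 1) * n ^ (k - π.get i) = n ^ (k - 1) := by
              rw [← pow_add]
              congr 1
              exact aux_n3 _ _ (hget_pos i) (hget_le i)
            calc (C * (π.get i * n ^ (π.get i - 1))) * n ^ (k - π.get i)
                = (C * π.get i) * (n ^ (π.get i - 1) * n ^ (k - π.get i)) := by ring
              _ = (C * n ^ (k - 1)) * π.get i := by rw [h3]; ring
        _ = C * (k * n ^ (k - 1)) := by
            rw [← Finset.mul_sum, hsum_fin]
            ring
    exact h0.trans (Nat.add_le_add_left h2 _)
  -- pass to the reals
  have hTcards : ∀ (c : Fin π.length → ℕ) (i : Fin π.length), ∀ u ∈ T i (c i), u.card = π.get i := by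
    intro c i u hu
    rw [hTdef] at hu
    exact (Finset.mem_filter.1 hu).2.1
  have hcardpi : (Fintype.piFinset (fun _ : Fin π.length => Finset.range C)).card = C ^ π.length := by
    rw [Fintype.card_piFinset]
    simp
  have hPBsum : (∏ i, (B i : ℝ))
      = ∑ c ∈ Fintype.piFinset (fun _ : Fin π.length => Finset.range C),
          ∏ i, ((T i (c i)).card : ℝ) := by
    calc ∏ i, (B i : ℝ) = ∏ i, ∑ c ∈ Finset.range C, ((T i c).card : ℝ) := by
          refine Finset.prod_congr rfl fun i _ => ?_
          rw [hBdef]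
          push_cast
          rfl
      _ = _ := Finset.prod_univ_sum _ _
  have hstep1 : |(eCount H S' : ℝ) - p * ∏ i, (B i : ℝ)| ≤ (C ^ π.length : ℕ) * F := by
    have hsplit : (eCount H S' : ℝ) - p * ∏ i, (B i : ℝ)
        = ∑ c ∈ Fintype.piFinset (fun _ : Fin π.length => Finset.range C),
            ((eCount H (fun i => T i (c i)) : ℝ) - p * ∏ i, ((T i (c i)).card : ℝ)) := by
      rw [Finset.sum_sub_distrib, ← Finset.mul_sum, ← hPBsum]
      congr 1
      rw [hI]
      push_cast
      rfl
    rw [hsplit]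
    calc |∑ c ∈ Fintype.piFinset (fun _ : Fin π.length => Finset.range C),
            ((eCount H (fun i => T i (c i)) : ℝ) - p * ∏ i, ((T i (c i)).card : ℝ))|
        ≤ ∑ c ∈ Fintype.piFinset (fun _ : Fin π.length => Finset.range C),
            |(eCount H (fun i => T i (c i)) : ℝ) - p * ∏ i, ((T i (c i)).card : ℝ)| :=
          Finset.abs_sum_le_sum_abs _ _
      _ ≤ ∑ _c ∈ Fintype.piFinset (fun _ : Fin π.length => Finset.range C), F :=
          Finset.sum_le_sum fun c _ => hbound _ (hTcards c)
      _ = ((C ^ π.length : ℕ) : ℝ) * F := by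
          rw [Finset.sum_const, hcardpi, nsmul_eq_mul]
  have hPBlePA : (∏ i, (B i : ℝ)) ≤ ∏ i, (A i : ℝ) := by
    have := Finset.prod_le_prod' (s := Finset.univ) (fun i _ => hBA i)
    exact_mod_cast this
  have hbadR : (∏ i, (A i : ℝ)) - ∏ i, (B i : ℝ) ≤ ((C * (k * n ^ (k - 1)) : ℕ) : ℝ) := by
    have hcast : ((∏ i, A i : ℕ) : ℝ) ≤ ((∏ i, B i + C * (k * n ^ (k - 1)) : ℕ) : ℝ) :=
      Nat.cast_le.2 hprod
    push_cast at hcast ⊢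
    linarith
  have hPA : (∏ j, ((S' j).card : ℝ)) = ∏ i, (A i : ℝ) := by
    exact_mod_cast congrArg (Nat.cast : ℕ → ℝ) hAB1
  calc |(eCount H S' : ℝ) - p * ∏ j, ((S' j).card : ℝ)|
      = |((eCount H S' : ℝ) - p * ∏ i, (B i : ℝ))
          - p * ((∏ i, (A i : ℝ)) - ∏ i, (B i : ℝ))| := by
        rw [hPA]; ring_nf
    _ ≤ |(eCount H S' : ℝ) - p * ∏ i, (B i : ℝ)|
          + p * ((∏ i, (A i : ℝ)) - ∏ i, (B i : ℝ)) := by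
        have h4 : 0 ≤ p * ((∏ i, (A i : ℝ)) - ∏ i, (B i : ℝ)) :=
          mul_nonneg hp0 (by linarith)
        calc |_ - p * (_ - _)| ≤ |(eCount H S' : ℝ) - p * ∏ i, (B i : ℝ)|
              + |p * ((∏ i, (A i : ℝ)) - ∏ i, (B i : ℝ))| := abs_sub _ _
          _ = _ := by rw [abs_of_nonneg h4]
    _ ≤ ((C ^ π.length : ℕ) : ℝ) * F + p * ((C * (k * n ^ (k - 1)) : ℕ) : ℝ) := by
        have h5 := mul_le_mul_of_nonneg_left hbadR hp0
        linarith

/-- if `π'` refines `π` then `Expand_p(π)` implies `Expand_p(π')`. -/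
theorem expand_of_refines (k : ℕ) (hk : 2 ≤ k)
    (p : ℝ) (hp0 : 0 < p) (hp1 : p < 1)
    (π π' : List ℕ) (hπ : ProperPartition k π) (hπ' : ProperPartition k π')
    (href : IsRefinement π' π)
    (H : HSeq) (hH : UniformSeq k H) (h : Expand k p π H) :
    Expand k p π' H := by
  obtain ⟨f, hf, hfb⟩ := h
  obtain ⟨φ, hφsurj, hφ⟩ := href
  obtain ⟨hπlen, hπpos, hπsum⟩ := hπ
  refine ⟨fun n => (((2 ^ (k * π'.length)) ^ π.length : ℕ) : ℝ) * |f n|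
      + p * ((2 ^ (k * π'.length) * (k * n ^ (k - 1)) : ℕ) : ℝ) + 2, ?_, ?_⟩
  · have h1 : (fun n => (((2 ^ (k * π'.length)) ^ π.length : ℕ) : ℝ) * |f n|)
        =o[atTop] (fun n => (n : ℝ) ^ k) := by
      have habs : (fun n => |f n|) =o[atTop] (fun n => (n : ℝ) ^ k) := by
        simpa [Real.norm_eq_abs] using hf.norm_left
      exact habs.const_mul_left _
    have h2 : (fun n : ℕ => p * ((2 ^ (k * π'.length) * (k * n ^ (k - 1)) : ℕ) : ℝ))
        =o[atTop] (fun n => (n : ℝ) ^ k) := by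
      have hp : (fun n : ℕ => ((n : ℝ)) ^ (k - 1)) =o[atTop] (fun n : ℕ => (n : ℝ) ^ k) :=
        (Asymptotics.isLittleO_pow_pow_atTop_of_lt (by omega)).comp_tendsto
          tendsto_natCast_atTop_atTop
      have heq : (fun n : ℕ => p * ((2 ^ (k * π'.length) * (k * n ^ (k - 1)) : ℕ) : ℝ))
          = fun n : ℕ => (p * ((2 ^ (k * π'.length) : ℕ) : ℝ) * k) * (n : ℝ) ^ (k - 1) := by
        funext n
        push_cast
        ring
      rw [heq]
      exact hp.const_mul_left _
    have h3 : (fun _ : ℕ => (2 : ℝ)) =o[atTop] (fun n : ℕ => (n : ℝ) ^ k) := by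
      refine Asymptotics.isLittleO_const_left.2 (Or.inr ?_)
      exact tendsto_norm_atTop_atTop.comp
        ((tendsto_pow_atTop (by omega)).comp tendsto_natCast_atTop_atTop)
    exact (h1.add h2).add h3
  · intro n S' hS'cards
    rcases Nat.eq_zero_or_pos n with rfl | hn
    · have hE : eCount (H 0) S' ≤ ∏ j, (S' j).card := by
        calc eCount (H 0) S' ≤ (Fintype.piFinset S').card := Finset.card_filter_le _ _
          _ = ∏ j, (S' j).card := Fintype.card_piFinset _
      have hsingle : ∀ j, (S' j).card ≤ 1 := by
        intro j
        calc (S' j).card ≤ Fintype.card (Finset (Fin 0)) := Finset.card_le_univ _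
          _ = 1 := by simp
      have hP1 : (∏ j, ((S' j).card : ℝ)) ≤ 1 := by
        have : ∏ j, (S' j).card ≤ 1 := by
          calc ∏ j, (S' j).card ≤ ∏ _j : Fin π'.length, 1 :=
                Finset.prod_le_prod' fun j _ => hsingle j
            _ = 1 := by simp
        exact_mod_cast Nat.cast_le.2 this |>.trans (by norm_num)
      have hP0 : (0 : ℝ) ≤ ∏ j, ((S' j).card : ℝ) :=
        Finset.prod_nonneg fun j _ => Nat.cast_nonneg _
      have hEr : (eCount (H 0) S' : ℝ) ≤ ∏ j, ((S' j).card : ℝ) := by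
        exact_mod_cast Nat.cast_le.2 hE
      have ht1 : (0 : ℝ) ≤ (((2 ^ (k * π'.length)) ^ π.length : ℕ) : ℝ) * |f 0| :=
        mul_nonneg (Nat.cast_nonneg _) (abs_nonneg _)
      have ht2 : (0 : ℝ) ≤ p * ((2 ^ (k * π'.length) * (k * 0 ^ (k - 1)) : ℕ) : ℝ) :=
        mul_nonneg hp0.le (Nat.cast_nonneg _)
      have habs : |(eCount (H 0) S' : ℝ) - p * ∏ j, ((S' j).card : ℝ)| ≤ 2 := by
        have hpP : p * (∏ j, ((S' j).card : ℝ)) ≤ ∏ j, ((S' j).card : ℝ) := by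
          nlinarith
        have hpP0 : 0 ≤ p * ∏ j, ((S' j).card : ℝ) := mul_nonneg hp0.le hP0
        have hE0 : (0 : ℝ) ≤ (eCount (H 0) S' : ℝ) := Nat.cast_nonneg _
        rw [abs_le]
        constructor <;> nlinarith
      dsimp only
      linarith
    · have hkey := key p hp0.le π π' hπpos hπsum φ hφ (H n) (hH n) (|f n|)
        (fun S hS => (hfb n S hS).trans (le_abs_self _)) S' hS'cards hn
      dsimp only
      linarith
end
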